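/- arXiv:2004.11290 — 2 statements merged into one kernel-verified Lean document; each statement's English description precedes it below -/
import Mathlib

section
/- For every c ∈ [0,1] the constrained density g_c satisfies: (a) g_c(0) = c; (b) c ≤ g_c(s) ≤ min(1, c + ℓ·s) for every s ≥ 0; (c) s ↦ g_c(s) is nondecreasing on [0,∞) and, for each fixed s, c ↦ g_c(s) is nondecreasing on [0,1]; (d) |g_c(s) − g_c(t)| ≤ ℓ·|s − t| for all s, t ≥ 0; (e) g_c(s₁ + s₂) ≤ g₀(s₁) + g_c(s₂) for all s₁, s₂ ≥ 0; and (f) if c > 0 then lim_{s→0⁺} (g_c(s) − c)/s = 0. -/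
open MeasureTheory Set Filter

/-- Hypotheses on the function `f₁` from Section 6.1 of the paper. -/
structure F1Hyp (ℓ ℓ₁ : ℝ) (f₁ : ℝ → ℝ) : Prop where
  hl : 0 < ℓ
  hl1 : 0 < ℓ₁
  cont : ContinuousOn f₁ (Icc 0 1)
  diff : ∃ d : ℝ → ℝ, ContinuousOn d (Ioc 0 1) ∧
    ∀ t ∈ Ioc (0:ℝ) 1, HasDerivWithinAt f₁ (d t) (Ioc 0 1) t
  anti : StrictAntiOn f₁ (Icc 0 1)
  nonneg : ∀ t ∈ Icc (0:ℝ) 1, 0 ≤ f₁ t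
  f10 : f₁ 0 = ℓ
  f11 : f₁ 1 = 0
  convexSqrt : ConvexOn ℝ (Icc 0 1) (fun u => f₁ (Real.sqrt u))
  lim0 : Tendsto (fun s => (f₁ s - ℓ + ℓ₁ * s) / s) (nhdsWithin 0 (Ioi 0)) (nhds 0)

/-- `γ` is admissible, with a.e. derivative `γ'` (absolute continuity is encoded by the
fundamental theorem of calculus representation with an `L¹` derivative). -/
def Admissible (γ γ' : ℝ → ℝ) : Prop :=
  IntegrableOn γ' (Icc 0 1) ∧
  (∀ t ∈ Icc (0:ℝ) 1, γ t = ∫ u in (0:ℝ)..t, γ' u) ∧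
  (∀ t ∈ Icc (0:ℝ) 1, 0 ≤ γ t ∧ γ t ≤ 1) ∧
  γ 0 = 0 ∧ γ 1 = 0

/-- The energy in the characterization (6.11). -/
noncomputable def energy (f₁ : ℝ → ℝ) (s : ℝ) (γ γ' : ℝ → ℝ) : ℝ :=
  ∫ t in (0:ℝ)..1, Real.sqrt (s ^ 2 * (f₁ (Real.sqrt (γ t))) ^ 2 + (γ' t) ^ 2 / 4)

/-- The cohesive energy density of pristine material, via characterization (6.11). -/
noncomputable def g0 (f₁ : ℝ → ℝ) (s : ℝ) : ℝ :=
  sInf {x | ∃ γ γ' : ℝ → ℝ, Admissible γ γ' ∧ x = energy f₁ s γ γ'}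


/-- The constrained cohesive energy density `g_c` of (7.6): the infimum is restricted to
admissible profiles with `sup_{[0,1]} γ ≥ c`. -/
noncomputable def gc (f₁ : ℝ → ℝ) (c s : ℝ) : ℝ :=
  sInf {x | ∃ γ γ' : ℝ → ℝ, Admissible γ γ' ∧ c ≤ sSup (γ '' Icc (0:ℝ) 1) ∧
    x = energy f₁ s γ γ'}

namespace Stmt18

lemma sqrt_le_of_sq {X R : ℝ} (hR : 0 ≤ R) (h : X ≤ R ^ 2) : Real.sqrt X ≤ R := by
  calc Real.sqrt X ≤ Real.sqrt (R ^ 2) := Real.sqrt_le_sqrt h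
  _ = R := Real.sqrt_sq hR

lemma sqrt_add_le {a b : ℝ} (ha : 0 ≤ a) (hb : 0 ≤ b) :
    Real.sqrt (a + b) ≤ Real.sqrt a + Real.sqrt b := by
  apply sqrt_le_of_sq (by positivity)
  have h1 := Real.sq_sqrt ha
  have h2 := Real.sq_sqrt hb
  nlinarith [Real.sqrt_nonneg a, Real.sqrt_nonneg b]

lemma sqrt_sq_div4 (x : ℝ) : Real.sqrt (x ^ 2 / 4) = |x| / 2 := by
  rw [show x ^ 2 / 4 = (x / 2) ^ 2 by ring, Real.sqrt_sq_eq_abs, abs_div]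
  norm_num

lemma pt_mono {s t F B : ℝ} (hs : 0 ≤ s) (hst : s ≤ t) (hF : 0 ≤ F) :
    Real.sqrt (s ^ 2 * F + B) ≤ Real.sqrt (t ^ 2 * F + B) := by
  apply Real.sqrt_le_sqrt
  have h4 : s ^ 2 ≤ t ^ 2 := by nlinarith
  nlinarith [mul_le_mul_of_nonneg_right h4 hF]

lemma pt_lip {s t f B : ℝ} (hs : 0 ≤ s) (ht : 0 ≤ t) (hf : 0 ≤ f) (hB : 0 ≤ B) :
    Real.sqrt (s ^ 2 * f ^ 2 + B) ≤ Real.sqrt (t ^ 2 * f ^ 2 + B) + |s - t| * f := by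
  have h0 : (0:ℝ) ≤ t ^ 2 * f ^ 2 + B := by positivity
  have h1 := Real.sq_sqrt h0
  have h2 : t * f ≤ Real.sqrt (t ^ 2 * f ^ 2 + B) := by
    rw [show t ^ 2 * f ^ 2 = (t * f) ^ 2 by ring] at h0 ⊢
    calc t * f = Real.sqrt ((t * f) ^ 2) := (Real.sqrt_sq (by positivity)).symm
    _ ≤ _ := Real.sqrt_le_sqrt (by nlinarith)
  apply sqrt_le_of_sq (by positivity)
  have h3 : s ≤ t + |s - t| := by
    rcases abs_cases (s - t) with ⟨h, _⟩ | ⟨h, _⟩ <;> linarith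
  have h4 : s ^ 2 ≤ (t + |s - t|) ^ 2 := by nlinarith [abs_nonneg (s - t)]
  have h5 : s ^ 2 * f ^ 2 ≤ (t + |s - t|) ^ 2 * f ^ 2 :=
    mul_le_mul_of_nonneg_right h4 (by positivity)
  have h6 : |s - t| * f * (t * f) ≤ |s - t| * f * Real.sqrt (t ^ 2 * f ^ 2 + B) :=
    mul_le_mul_of_nonneg_left h2 (by positivity)
  nlinarith [abs_nonneg (s - t)]

lemma pt_quad {x k : ℝ} (hk : 0 < k) :
    Real.sqrt (x ^ 2 + k ^ 2) ≤ k + x ^ 2 / (2 * k) := by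
  apply sqrt_le_of_sq (by positivity)
  have e : (k + x ^ 2 / (2 * k)) ^ 2 = k ^ 2 + x ^ 2 + x ^ 4 / (4 * k ^ 2) := by
    field_simp; ring
  have : 0 ≤ x ^ 4 / (4 * k ^ 2) := by positivity
  rw [e]; linarith

lemma mul_sqrt_eq {l : ℝ} (hl : 0 ≤ l) (x : ℝ) :
    l * Real.sqrt x = Real.sqrt (l ^ 2 * x) := by
  rw [show l ^ 2 * x = l ^ 2 * x from rfl, Real.sqrt_mul (by positivity) x,
    Real.sqrt_sq hl]

end Stmt18
namespace Stmt18

structure F1Hyp' (ℓ : ℝ) (f₁ : ℝ → ℝ) : Prop where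
  hl : 0 < ℓ
  cont : ContinuousOn f₁ (Icc 0 1)
  nonneg : ∀ t ∈ Icc (0:ℝ) 1, 0 ≤ f₁ t
  le_l : ∀ t ∈ Icc (0:ℝ) 1, f₁ t ≤ ℓ
  f11 : f₁ 1 = 0

variable {ℓ : ℝ} {f₁ : ℝ → ℝ} {γ γ' : ℝ → ℝ}

lemma adm_cont (h : Admissible γ γ') : ContinuousOn γ (Icc 0 1) := by
  have h1 : ContinuousOn (fun x => ∫ u in (0:ℝ)..x, γ' u) (Icc 0 1) := by
    have := intervalIntegral.continuousOn_primitive_interval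
      (a := 0) (b := 1) (μ := volume) (f := γ')
      (by rw [uIcc_of_le zero_le_one]; exact h.1)
    rwa [uIcc_of_le zero_le_one] at this
  exact h1.congr h.2.1

lemma adm_ii (h : Admissible γ γ') {a b : ℝ} (ha : 0 ≤ a) (hab : a ≤ b) (hb : b ≤ 1) :
    IntervalIntegrable γ' volume a b := by
  rw [intervalIntegrable_iff_integrableOn_Icc_of_le hab]
  exact h.1.mono_set (Icc_subset_Icc ha hb)

lemma adm_sqrt_mem (h : Admissible γ γ') {t : ℝ} (ht : t ∈ Icc (0:ℝ) 1) :
    Real.sqrt (γ t) ∈ Icc (0:ℝ) 1 :=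
  ⟨Real.sqrt_nonneg _, Real.sqrt_le_one.mpr (h.2.2.1 t ht).2⟩

lemma adm_f1_cont (hf : F1Hyp' ℓ f₁) (h : Admissible γ γ') :
    ContinuousOn (fun t => f₁ (Real.sqrt (γ t))) (Icc 0 1) :=
  hf.cont.comp (Real.continuous_sqrt.comp_continuousOn (adm_cont h))
    (fun t ht => adm_sqrt_mem h ht)

lemma adm_f1_bdd (hf : F1Hyp' ℓ f₁) (h : Admissible γ γ') {t : ℝ} (ht : t ∈ Icc (0:ℝ) 1) :
    0 ≤ f₁ (Real.sqrt (γ t)) ∧ f₁ (Real.sqrt (γ t)) ≤ ℓ :=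
  ⟨hf.nonneg _ (adm_sqrt_mem h ht), hf.le_l _ (adm_sqrt_mem h ht)⟩

/-- The integrand of the energy. -/
noncomputable def integrand (f₁ : ℝ → ℝ) (s : ℝ) (γ γ' : ℝ → ℝ) (t : ℝ) : ℝ :=
  Real.sqrt (s ^ 2 * (f₁ (Real.sqrt (γ t))) ^ 2 + (γ' t) ^ 2 / 4)

lemma energy_eq (f₁ : ℝ → ℝ) (s : ℝ) (γ γ' : ℝ → ℝ) :
    energy f₁ s γ γ' = ∫ t in (0:ℝ)..1, integrand f₁ s γ γ' t := rfl

lemma integrand_nonneg (f₁ : ℝ → ℝ) (s : ℝ) (γ γ' : ℝ → ℝ) (t : ℝ) :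
    0 ≤ integrand f₁ s γ γ' t := Real.sqrt_nonneg _

lemma integrand_le (hf : F1Hyp' ℓ f₁) (h : Admissible γ γ') (s : ℝ)
    {t : ℝ} (ht : t ∈ Icc (0:ℝ) 1) :
    integrand f₁ s γ γ' t ≤ |s| * ℓ + |γ' t| / 2 := by
  obtain ⟨hA0, hAl⟩ := adm_f1_bdd hf h ht
  set A := f₁ (Real.sqrt (γ t))
  calc integrand f₁ s γ γ' t ≤ Real.sqrt (s ^ 2 * A ^ 2) + Real.sqrt ((γ' t) ^ 2 / 4) :=
        sqrt_add_le (by positivity) (by positivity)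
  _ = |s| * A + |γ' t| / 2 := by
        rw [show s ^ 2 * A ^ 2 = (s * A) ^ 2 by ring, Real.sqrt_sq_eq_abs, abs_mul,
          abs_of_nonneg hA0, sqrt_sq_div4]
  _ ≤ |s| * ℓ + |γ' t| / 2 := by
        have := mul_le_mul_of_nonneg_left hAl (abs_nonneg s); linarith

lemma integrand_intervalIntegrable (hf : F1Hyp' ℓ f₁) (h : Admissible γ γ') (s : ℝ) :
    IntervalIntegrable (integrand f₁ s γ γ') volume 0 1 := by
  rw [intervalIntegrable_iff_integrableOn_Icc_of_le zero_le_one]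
  have hA : IntegrableOn (fun t => f₁ (Real.sqrt (γ t))) (Icc 0 1) :=
    (adm_f1_cont hf h).integrableOn_Icc
  have hmA : AEMeasurable (fun t => f₁ (Real.sqrt (γ t))) (volume.restrict (Icc 0 1)) :=
    hA.aestronglyMeasurable.aemeasurable
  have hmγ' : AEMeasurable γ' (volume.restrict (Icc 0 1)) :=
    h.1.aestronglyMeasurable.aemeasurable
  have hm : AEMeasurable (integrand f₁ s γ γ') (volume.restrict (Icc 0 1)) := by
    apply Real.continuous_sqrt.measurable.comp_aemeasurable
    exact ((hmA.pow_const 2).const_mul (s ^ 2)).add ((hmγ'.pow_const 2).div_const 4)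
  have hg : IntegrableOn (fun t => |s| * ℓ + |γ' t| / 2) (Icc 0 1) := by
    exact (integrableOn_const (by simp)).add ((h.1.abs).div_const 2)
  apply Integrable.mono' hg hm.aestronglyMeasurable
  filter_upwards [ae_restrict_mem measurableSet_Icc] with t ht
  rw [Real.norm_eq_abs, abs_of_nonneg (integrand_nonneg f₁ s γ γ' t)]
  exact integrand_le hf h s ht

lemma energy_nonneg (f₁ : ℝ → ℝ) (s : ℝ) (γ γ' : ℝ → ℝ) : 0 ≤ energy f₁ s γ γ' :=
  intervalIntegral.integral_nonneg zero_le_one fun t _ => Real.sqrt_nonneg _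

lemma energy_mono (hf : F1Hyp' ℓ f₁) (h : Admissible γ γ') {s t : ℝ}
    (hs : 0 ≤ s) (hst : s ≤ t) : energy f₁ s γ γ' ≤ energy f₁ t γ γ' := by
  rw [energy_eq, energy_eq]
  apply intervalIntegral.integral_mono_on zero_le_one
    (integrand_intervalIntegrable hf h s) (integrand_intervalIntegrable hf h t)
  intro u hu
  exact pt_mono hs hst (by positivity)

lemma energy_lip (hf : F1Hyp' ℓ f₁) (h : Admissible γ γ') {s t : ℝ}
    (hs : 0 ≤ s) (ht : 0 ≤ t) :
    energy f₁ s γ γ' ≤ energy f₁ t γ γ' + ℓ * |s - t| := by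
  rw [energy_eq, energy_eq]
  have key : ∀ u ∈ Icc (0:ℝ) 1,
      integrand f₁ s γ γ' u ≤ integrand f₁ t γ γ' u + |s - t| * ℓ := by
    intro u hu
    obtain ⟨hA0, hAl⟩ := adm_f1_bdd hf h hu
    calc integrand f₁ s γ γ' u
        ≤ integrand f₁ t γ γ' u + |s - t| * f₁ (Real.sqrt (γ u)) :=
          pt_lip (B := (γ' u) ^ 2 / 4) hs ht hA0 (by positivity)
    _ ≤ integrand f₁ t γ γ' u + |s - t| * ℓ := by
          have := mul_le_mul_of_nonneg_left hAl (abs_nonneg (s - t)); linarith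
  calc (∫ u in (0:ℝ)..1, integrand f₁ s γ γ' u)
      ≤ ∫ u in (0:ℝ)..1, (integrand f₁ t γ γ' u + |s - t| * ℓ) := by
        apply intervalIntegral.integral_mono_on zero_le_one
          (integrand_intervalIntegrable hf h s)
          ((integrand_intervalIntegrable hf h t).add intervalIntegrable_const) key
  _ = (∫ u in (0:ℝ)..1, integrand f₁ t γ γ' u) + ℓ * |s - t| := by
        rw [intervalIntegral.integral_add (integrand_intervalIntegrable hf h t)
          intervalIntegrable_const, intervalIntegral.integral_const]
        simp [mul_comm]

lemma adm_two_gamma_le (h : Admissible γ γ') {t : ℝ} (ht : t ∈ Icc (0:ℝ) 1) :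
    2 * γ t ≤ ∫ u in (0:ℝ)..1, |γ' u| := by
  have ii1 : IntervalIntegrable γ' volume 0 t := adm_ii h le_rfl ht.1 ht.2
  have ii2 : IntervalIntegrable γ' volume t 1 := adm_ii h ht.1 ht.2 le_rfl
  have hsplit : (∫ u in (0:ℝ)..t, γ' u) + ∫ u in t..1, γ' u = ∫ u in (0:ℝ)..1, γ' u :=
    intervalIntegral.integral_add_adjacent_intervals ii1 ii2
  have h1 : γ 1 = ∫ u in (0:ℝ)..1, γ' u := h.2.1 1 ⟨zero_le_one, le_rfl⟩
  have hγt : γ t = ∫ u in (0:ℝ)..t, γ' u := h.2.1 t ht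
  have e1 : γ t ≤ ∫ u in (0:ℝ)..t, |γ' u| := by
    rw [hγt]
    exact (le_abs_self _).trans (intervalIntegral.abs_integral_le_integral_abs ht.1)
  have e2 : γ t ≤ ∫ u in t..1, |γ' u| := by
    have : γ t = -∫ u in t..1, γ' u := by rw [h.2.2.2.2] at h1; linarith [hγt ▸ hsplit]
    rw [this]
    exact (neg_le_abs _).trans (intervalIntegral.abs_integral_le_integral_abs ht.2)
  have habs : (∫ u in (0:ℝ)..t, |γ' u|) + ∫ u in t..1, |γ' u| = ∫ u in (0:ℝ)..1, |γ' u| :=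
    intervalIntegral.integral_add_adjacent_intervals ii1.abs ii2.abs
  linarith

lemma energy_ge_half_var (hf : F1Hyp' ℓ f₁) (h : Admissible γ γ') (s : ℝ) :
    (∫ u in (0:ℝ)..1, |γ' u|) / 2 ≤ energy f₁ s γ γ' := by
  rw [energy_eq]
  have : (∫ u in (0:ℝ)..1, |γ' u|) / 2 = ∫ u in (0:ℝ)..1, |γ' u| / 2 := by
    rw [intervalIntegral.integral_div]
  rw [this]
  apply intervalIntegral.integral_mono_on zero_le_one
    ((adm_ii h le_rfl zero_le_one le_rfl).abs.div_const 2)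
    (integrand_intervalIntegrable hf h s)
  intro u _
  rw [← sqrt_sq_div4]
  simp only [integrand]
  exact Real.sqrt_le_sqrt (le_add_of_nonneg_left (by positivity))

lemma energy_ge_c (hf : F1Hyp' ℓ f₁) (h : Admissible γ γ') {c : ℝ}
    (hsup : c ≤ sSup (γ '' Icc (0:ℝ) 1)) (s : ℝ) : c ≤ energy f₁ s γ γ' := by
  have hne : (γ '' Icc (0:ℝ) 1).Nonempty :=
    ⟨γ 0, mem_image_of_mem γ ⟨le_rfl, zero_le_one⟩⟩
  have hub : sSup (γ '' Icc (0:ℝ) 1) ≤ (∫ u in (0:ℝ)..1, |γ' u|) / 2 := by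
    apply csSup_le hne
    rintro y ⟨t, ht, rfl⟩
    linarith [adm_two_gamma_le h ht]
  exact hsup.trans (hub.trans (energy_ge_half_var hf h s))

end Stmt18
namespace Stmt18

variable {ℓ : ℝ} {f₁ : ℝ → ℝ}

noncomputable def tent (c : ℝ) : ℝ → ℝ := fun t => c * (1 - |2 * t - 1|)
noncomputable def tent' (c : ℝ) : ℝ → ℝ := fun t => if t ≤ 1 / 2 then 2 * c else -(2 * c)

lemma tent'_sq (c t : ℝ) : (tent' c t) ^ 2 = 4 * c ^ 2 := by
  unfold tent'; split <;> ring

lemma tent'_integrableOn (c : ℝ) : IntegrableOn (tent' c) (Icc 0 1) := by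
  have hm : Measurable (tent' c) :=
    Measurable.ite measurableSet_Iic measurable_const measurable_const
  apply Integrable.mono' (g := fun _ => 2 * |c|)
    (integrableOn_const (by simp)) hm.aestronglyMeasurable.restrict
  apply ae_of_all
  intro t
  unfold tent'
  split <;> simp [abs_mul] <;> rw [abs_of_nonneg (by norm_num : (0:ℝ) ≤ 2)] <;> norm_num

lemma tent_integral_first {c t : ℝ} (h0 : 0 ≤ t) (h : t ≤ 1 / 2) :
    (∫ u in (0:ℝ)..t, tent' c u) = 2 * c * t := by
  rw [intervalIntegral.integral_congr (g := fun _ => 2 * c)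
    (fun u hu => by
      rw [uIcc_of_le h0] at hu
      exact if_pos (hu.2.trans h))]
  rw [intervalIntegral.integral_const]; simp [mul_comm]

lemma tent_integral (c : ℝ) {t : ℝ} (ht : t ∈ Icc (0:ℝ) 1) :
    (∫ u in (0:ℝ)..t, tent' c u) = tent c t := by
  have ii : ∀ a b : ℝ, 0 ≤ a → a ≤ b → b ≤ 1 → IntervalIntegrable (tent' c) volume a b := by
    intro a b ha hab hb
    rw [intervalIntegrable_iff_integrableOn_Icc_of_le hab]
    exact (tent'_integrableOn c).mono_set (Icc_subset_Icc ha hb)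
  rcases le_or_gt t (1 / 2) with h | h
  · rw [tent_integral_first ht.1 h]
    unfold tent
    rw [abs_of_nonpos (by linarith)]; ring
  · have hsplit : (∫ u in (0:ℝ)..(1/2:ℝ), tent' c u) + ∫ u in (1/2:ℝ)..t, tent' c u
        = ∫ u in (0:ℝ)..t, tent' c u :=
      intervalIntegral.integral_add_adjacent_intervals
        (ii 0 (1/2) le_rfl (by norm_num) (by norm_num))
        (ii (1/2) t (by norm_num) h.le ht.2)
    have h1 : (∫ u in (0:ℝ)..(1/2:ℝ), tent' c u) = c := by
      rw [tent_integral_first (by norm_num) le_rfl]; ring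
    have h2 : (∫ u in (1/2:ℝ)..t, tent' c u) = -(2 * c) * (t - 1/2) := by
      rw [intervalIntegral.integral_congr_ae (g := fun _ => -(2 * c)) (ae_of_all _ ?_)]
      · rw [intervalIntegral.integral_const]; simp [mul_comm]
      · intro u hu
        rw [uIoc_of_le h.le] at hu
        exact if_neg (not_le.2 hu.1)
    rw [← hsplit, h1, h2]
    unfold tent
    rw [abs_of_nonneg (by linarith)]; ring

lemma tent_admissible {c : ℝ} (hc : c ∈ Icc (0:ℝ) 1) : Admissible (tent c) (tent' c) := by
  refine ⟨tent'_integrableOn c, fun t ht => (tent_integral c ht).symm, ?_, ?_, ?_⟩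
  · intro t ht
    have habs : |2 * t - 1| ≤ 1 := by
      rw [abs_le]; constructor <;> [linarith [ht.1]; linarith [ht.2]]
    have h0 : 0 ≤ 1 - |2 * t - 1| := by linarith
    have h1 : 1 - |2 * t - 1| ≤ 1 := by linarith [abs_nonneg (2 * t - 1)]
    constructor
    · exact mul_nonneg hc.1 h0
    · calc c * (1 - |2 * t - 1|) ≤ 1 * 1 := mul_le_mul hc.2 h1 h0 zero_le_one
      _ = 1 := by ring
  · unfold tent; norm_num
  · unfold tent; norm_num

lemma tent_sup {c : ℝ} (hc : c ∈ Icc (0:ℝ) 1) :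
    c ≤ sSup (tent c '' Icc (0:ℝ) 1) := by
  have hmem : c ∈ tent c '' Icc (0:ℝ) 1 := by
    refine ⟨1/2, by norm_num, ?_⟩
    unfold tent; norm_num
  apply le_csSup ?_ hmem
  refine ⟨1, ?_⟩
  rintro y ⟨t, ht, rfl⟩
  exact ((tent_admissible hc).2.2.1 t ht).2

lemma tent_energy_le (hf : F1Hyp' ℓ f₁) {c : ℝ} (hc : c ∈ Icc (0:ℝ) 1) {s : ℝ} (hs : 0 ≤ s) :
    energy f₁ s (tent c) (tent' c) ≤ c + ℓ * s := by
  rw [energy_eq]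
  have key : ∀ t ∈ Icc (0:ℝ) 1, integrand f₁ s (tent c) (tent' c) t ≤ ℓ * s + c := by
    intro t ht
    obtain ⟨hA0, hAl⟩ := adm_f1_bdd hf (tent_admissible hc) ht
    set A := f₁ (Real.sqrt (tent c t)) with hA
    simp only [integrand, tent'_sq]
    apply sqrt_le_of_sq (add_nonneg (mul_nonneg hf.hl.le hs) hc.1)
    have h1 : s * A ≤ s * ℓ := mul_le_mul_of_nonneg_left hAl hs
    nlinarith [mul_nonneg hs hA0, hc.1, mul_nonneg (mul_nonneg hs hA0) hc.1]
  calc (∫ t in (0:ℝ)..1, integrand f₁ s (tent c) (tent' c) t)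
      ≤ ∫ _ in (0:ℝ)..1, (ℓ * s + c) :=
        intervalIntegral.integral_mono_on zero_le_one
          (integrand_intervalIntegrable hf (tent_admissible hc) s)
          intervalIntegrable_const key
  _ = c + ℓ * s := by rw [intervalIntegral.integral_const]; simp; ring

lemma tent_energy_zero (hf : F1Hyp' ℓ f₁) {c : ℝ} (hc : c ∈ Icc (0:ℝ) 1) :
    energy f₁ 0 (tent c) (tent' c) = c := by
  rw [energy_eq]
  have : ∀ t ∈ uIcc (0:ℝ) 1, integrand f₁ 0 (tent c) (tent' c) t = c := by
    intro t _
    simp only [integrand, tent'_sq]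
    rw [show (0:ℝ) ^ 2 * (f₁ (Real.sqrt (tent c t))) ^ 2 + 4 * c ^ 2 / 4 = c ^ 2 by ring,
      Real.sqrt_sq hc.1]
  rw [intervalIntegral.integral_congr this, intervalIntegral.integral_const]
  simp

lemma tent_energy_quad (hf : F1Hyp' ℓ f₁) {c : ℝ} (hc0 : 0 < c) (hc1 : c ≤ 1) (s : ℝ) :
    energy f₁ s (tent c) (tent' c) ≤ c + s ^ 2 * ℓ ^ 2 / (2 * c) := by
  have hc : c ∈ Icc (0:ℝ) 1 := ⟨hc0.le, hc1⟩
  rw [energy_eq]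
  have key : ∀ t ∈ Icc (0:ℝ) 1,
      integrand f₁ s (tent c) (tent' c) t ≤ c + s ^ 2 * ℓ ^ 2 / (2 * c) := by
    intro t ht
    obtain ⟨hA0, hAl⟩ := adm_f1_bdd hf (tent_admissible hc) ht
    set A := f₁ (Real.sqrt (tent c t)) with hA
    simp only [integrand, tent'_sq]
    have h1 : s ^ 2 * A ^ 2 + 4 * c ^ 2 / 4 = (s * A) ^ 2 + c ^ 2 := by ring
    rw [h1]
    calc Real.sqrt ((s * A) ^ 2 + c ^ 2) ≤ c + (s * A) ^ 2 / (2 * c) := pt_quad hc0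
    _ ≤ c + s ^ 2 * ℓ ^ 2 / (2 * c) := by
        have h2 : (s * A) ^ 2 ≤ s ^ 2 * ℓ ^ 2 := by
          nlinarith [mul_le_mul_of_nonneg_left (mul_self_le_mul_self hA0 hAl) (sq_nonneg s)]
        gcongr
  calc (∫ t in (0:ℝ)..1, integrand f₁ s (tent c) (tent' c) t)
      ≤ ∫ _ in (0:ℝ)..1, (c + s ^ 2 * ℓ ^ 2 / (2 * c)) :=
        intervalIntegral.integral_mono_on zero_le_one
          (integrand_intervalIntegrable hf (tent_admissible hc) s)
          intervalIntegrable_const key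
  _ = c + s ^ 2 * ℓ ^ 2 / (2 * c) := by rw [intervalIntegral.integral_const]; simp

end Stmt18
namespace Stmt18

variable {ℓ : ℝ} {f₁ : ℝ → ℝ}

noncomputable def plat (ε : ℝ) : ℝ → ℝ := fun t => min (min (t / ε) 1) ((1 - t) / ε)
noncomputable def plat' (ε : ℝ) : ℝ → ℝ := fun t =>
  if t ≤ ε then 1 / ε else if t ≤ 1 - ε then 0 else -(1 / ε)

lemma plat'_abs_le {ε : ℝ} (hε : 0 < ε) (t : ℝ) : |plat' ε t| ≤ 1 / ε := by
  unfold plat'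
  split
  · rw [abs_of_nonneg (by positivity)]
  · split
    · simp; positivity
    · rw [abs_neg, abs_of_nonneg (by positivity)]

lemma plat'_integrableOn {ε : ℝ} (hε : 0 < ε) : IntegrableOn (plat' ε) (Icc 0 1) := by
  have hm : Measurable (plat' ε) :=
    Measurable.ite measurableSet_Iic measurable_const
      (Measurable.ite measurableSet_Iic measurable_const measurable_const)
  apply Integrable.mono' (g := fun _ => 1 / ε)
    (integrableOn_const (by simp) (by simp)) hm.aestronglyMeasurable.restrict
  exact ae_of_all _ fun t => by rw [Real.norm_eq_abs]; exact plat'_abs_le hε t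

lemma plat_ii {ε : ℝ} (hε : 0 < ε) {a b : ℝ} (ha : 0 ≤ a) (hab : a ≤ b) (hb : b ≤ 1) :
    IntervalIntegrable (plat' ε) volume a b := by
  rw [intervalIntegrable_iff_integrableOn_Icc_of_le hab]
  exact (plat'_integrableOn hε).mono_set (Icc_subset_Icc ha hb)

lemma plat_val1 {ε t : ℝ} (hε : 0 < ε) (hε2 : ε < 1/2) (h0 : 0 ≤ t) (h1 : t ≤ ε) :
    plat ε t = t / ε := by
  have ha : t / ε ≤ 1 := by rw [div_le_one hε]; linarith
  have hb : t / ε ≤ (1 - t) / ε := by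
    gcongr
    linarith
  unfold plat
  rw [min_eq_left ha, min_eq_left hb]

lemma plat_val2 {ε t : ℝ} (hε : 0 < ε) (hε2 : ε < 1/2) (h0 : ε < t) (h1 : t ≤ 1 - ε) :
    plat ε t = 1 := by
  have ha : (1:ℝ) ≤ t / ε := (one_le_div hε).mpr h0.le
  have hb : (1:ℝ) ≤ (1 - t) / ε := (one_le_div hε).mpr (by linarith)
  unfold plat
  rw [min_eq_right ha, min_eq_left hb]

lemma plat_val3 {ε t : ℝ} (hε : 0 < ε) (hε2 : ε < 1/2) (h0 : 1 - ε < t) (h1 : t ≤ 1) :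
    plat ε t = (1 - t) / ε := by
  have ha : (1:ℝ) ≤ t / ε := (one_le_div hε).mpr (by linarith)
  have hb : (1 - t) / ε ≤ 1 := by rw [div_le_one hε]; linarith
  unfold plat
  rw [min_eq_right ha, min_eq_right hb]

lemma plat_integral1 {ε t : ℝ} (hε : 0 < ε) (h0 : 0 ≤ t) (h1 : t ≤ ε) :
    (∫ u in (0:ℝ)..t, plat' ε u) = t / ε := by
  rw [intervalIntegral.integral_congr (g := fun _ => 1 / ε)
    (fun u hu => by
      rw [uIcc_of_le h0] at hu
      exact if_pos (hu.2.trans h1))]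
  rw [intervalIntegral.integral_const, smul_eq_mul, sub_zero]
  ring

lemma plat_integral_mid {ε : ℝ} (hε : 0 < ε) {a b : ℝ} (hea : ε ≤ a) (hab : a ≤ b)
    (hbe : b ≤ 1 - ε) : (∫ u in a..b, plat' ε u) = 0 := by
  rw [intervalIntegral.integral_congr_ae (g := fun _ => (0:ℝ)) (ae_of_all _ ?_)]
  · simp
  · intro u hu
    rw [uIoc_of_le hab] at hu
    rw [plat', if_neg (by linarith [hu.1]), if_pos (by linarith [hu.2])]

lemma plat_integral (ε : ℝ) (hε : 0 < ε) (hε2 : ε < 1/2) {t : ℝ} (ht : t ∈ Icc (0:ℝ) 1) :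
    (∫ u in (0:ℝ)..t, plat' ε u) = plat ε t := by
  rcases le_or_gt t ε with h | h
  · rw [plat_integral1 hε ht.1 h, plat_val1 hε hε2 ht.1 h]
  rcases le_or_gt t (1 - ε) with h2 | h2
  · have i1 : IntervalIntegrable (plat' ε) volume 0 ε := plat_ii hε le_rfl hε.le (by linarith)
    have i2 : IntervalIntegrable (plat' ε) volume ε t := plat_ii hε hε.le h.le ht.2
    have hsplit := intervalIntegral.integral_add_adjacent_intervals i1 i2
    rw [← hsplit, plat_integral1 hε hε.le le_rfl, plat_integral_mid hε le_rfl h.le h2,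
      plat_val2 hε hε2 h h2, div_self hε.ne']
    ring
  · have i1 : IntervalIntegrable (plat' ε) volume 0 ε := plat_ii hε le_rfl hε.le (by linarith)
    have i2 : IntervalIntegrable (plat' ε) volume ε (1-ε) :=
      plat_ii hε hε.le (by linarith) (by linarith)
    have i3 : IntervalIntegrable (plat' ε) volume 0 (1-ε) :=
      plat_ii hε le_rfl (by linarith) (by linarith)
    have i4 : IntervalIntegrable (plat' ε) volume (1-ε) t :=
      plat_ii hε (by linarith) h2.le ht.2
    have hsplit1 := intervalIntegral.integral_add_adjacent_intervals i1 i2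
    have hsplit2 := intervalIntegral.integral_add_adjacent_intervals i3 i4
    have hlast : (∫ u in (1-ε)..t, plat' ε u) = -(1/ε) * (t - (1 - ε)) := by
      rw [intervalIntegral.integral_congr_ae (g := fun _ => -(1/ε)) (ae_of_all _ ?_)]
      · rw [intervalIntegral.integral_const, smul_eq_mul]; ring
      · intro u hu
        rw [uIoc_of_le h2.le] at hu
        rw [plat', if_neg (by linarith [hu.1]), if_neg (by linarith [hu.1])]
    rw [← hsplit2, ← hsplit1, plat_integral1 hε hε.le le_rfl,
      plat_integral_mid hε le_rfl (by linarith) le_rfl, hlast, plat_val3 hε hε2 h2 ht.2,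
      div_self hε.ne']
    field_simp
    ring

lemma plat_admissible {ε : ℝ} (hε : 0 < ε) (hε2 : ε < 1/2) :
    Admissible (plat ε) (plat' ε) := by
  refine ⟨plat'_integrableOn hε, fun t ht => (plat_integral ε hε hε2 ht).symm, ?_, ?_, ?_⟩
  · intro t ht
    constructor
    · have h1t : 0 ≤ 1 - t := by linarith [ht.2]
      exact le_min (le_min (div_nonneg ht.1 hε.le) zero_le_one) (div_nonneg h1t hε.le)
    · exact (min_le_left _ _).trans (min_le_right _ _)
  · rw [plat_val1 hε hε2 le_rfl hε.le, zero_div]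
  · rw [plat_val3 hε hε2 (by linarith) le_rfl, sub_self, zero_div]

lemma plat_sup {ε : ℝ} (hε : 0 < ε) (hε2 : ε < 1/2) {c : ℝ} (hc : c ≤ 1) :
    c ≤ sSup (plat ε '' Icc (0:ℝ) 1) := by
  have hmem : (1:ℝ) ∈ plat ε '' Icc (0:ℝ) 1 := by
    refine ⟨1/2, by norm_num, plat_val2 hε hε2 hε2 (by linarith)⟩
  refine hc.trans (le_csSup ⟨1, ?_⟩ hmem)
  rintro y ⟨t, ht, rfl⟩
  exact ((plat_admissible hε hε2).2.2.1 t ht).2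

lemma plat_energy_le (hf : F1Hyp' ℓ f₁) {ε : ℝ} (hε : 0 < ε) (hε2 : ε < 1/2)
    {s : ℝ} (hs : 0 ≤ s) :
    energy f₁ s (plat ε) (plat' ε) ≤ 1 + 2 * ε * (ℓ * s) := by
  have hadm := plat_admissible hε hε2
  have hii := integrand_intervalIntegrable hf hadm s
  have hiisub : ∀ a b : ℝ, 0 ≤ a → a ≤ b → b ≤ 1 →
      IntervalIntegrable (integrand f₁ s (plat ε) (plat' ε)) volume a b := by
    intro a b ha hab hb
    rw [intervalIntegrable_iff_integrableOn_Icc_of_le hab]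
    rw [intervalIntegrable_iff_integrableOn_Icc_of_le zero_le_one] at hii
    exact hii.mono_set (Icc_subset_Icc ha hb)
  have hbd : ∀ t ∈ Icc (0:ℝ) 1, integrand f₁ s (plat ε) (plat' ε) t ≤ s * ℓ + 1/(2*ε) := by
    intro t ht
    obtain ⟨hA0, hAl⟩ := adm_f1_bdd hf hadm ht
    set A := f₁ (Real.sqrt (plat ε t))
    simp only [integrand]
    calc Real.sqrt (s^2 * A^2 + (plat' ε t)^2/4)
        ≤ Real.sqrt (s^2*A^2) + Real.sqrt ((plat' ε t)^2/4) :=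
          sqrt_add_le (by positivity) (by positivity)
    _ = |s| * A + |plat' ε t| / 2 := by
        rw [show s^2*A^2 = (s*A)^2 by ring, Real.sqrt_sq_eq_abs, abs_mul,
          abs_of_nonneg hA0, sqrt_sq_div4]
    _ ≤ s * ℓ + 1/(2*ε) := by
        rw [abs_of_nonneg hs]
        have h1 : s * A ≤ s * ℓ := mul_le_mul_of_nonneg_left hAl hs
        have h2 : |plat' ε t| ≤ 1/ε := plat'_abs_le hε t
        have h3 : |plat' ε t| / 2 ≤ 1/(2*ε) := by
          rw [show (1:ℝ)/(2*ε) = (1/ε)/2 by ring]; linarith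
        linarith
  have hmid : (∫ t in ε..(1-ε), integrand f₁ s (plat ε) (plat' ε) t) = 0 := by
    rw [intervalIntegral.integral_congr_ae (g := fun _ => (0:ℝ)) (ae_of_all _ ?_)]
    · simp
    · intro u hu
      rw [uIoc_of_le (by linarith)] at hu
      have h1 : plat ε u = 1 := plat_val2 hε hε2 hu.1 hu.2
      have h2 : plat' ε u = 0 := by
        rw [plat', if_neg (by linarith [hu.1]), if_pos (by linarith [hu.2])]
      simp only [integrand, h1, h2, Real.sqrt_one, hf.f11]
      norm_num
  have hpiece : ∀ a b : ℝ, 0 ≤ a → a ≤ b → b ≤ 1 →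
      (∫ t in a..b, integrand f₁ s (plat ε) (plat' ε) t) ≤ (b - a) * (s*ℓ + 1/(2*ε)) := by
    intro a b ha hab hb
    calc (∫ t in a..b, integrand f₁ s (plat ε) (plat' ε) t)
        ≤ ∫ _ in a..b, (s*ℓ + 1/(2*ε)) :=
          intervalIntegral.integral_mono_on hab (hiisub a b ha hab hb)
            intervalIntegrable_const
            (fun u hu => hbd u ⟨ha.trans hu.1, hu.2.trans hb⟩)
    _ = (b - a) * (s*ℓ + 1/(2*ε)) := by rw [intervalIntegral.integral_const, smul_eq_mul]
  have j1 : IntervalIntegrable (integrand f₁ s (plat ε) (plat' ε)) volume 0 ε :=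
    hiisub 0 ε le_rfl hε.le (by linarith)
  have j2 : IntervalIntegrable (integrand f₁ s (plat ε) (plat' ε)) volume ε 1 :=
    hiisub ε 1 hε.le (by linarith) le_rfl
  have j3 : IntervalIntegrable (integrand f₁ s (plat ε) (plat' ε)) volume ε (1-ε) :=
    hiisub ε (1-ε) hε.le (by linarith) (by linarith)
  have j4 : IntervalIntegrable (integrand f₁ s (plat ε) (plat' ε)) volume (1-ε) 1 :=
    hiisub (1-ε) 1 (by linarith) (by linarith) le_rfl
  have hsplit1 := intervalIntegral.integral_add_adjacent_intervals j1 j2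
  have hsplit2 := intervalIntegral.integral_add_adjacent_intervals j3 j4
  have h1 := hpiece 0 ε le_rfl hε.le (by linarith)
  have h3 := hpiece (1-ε) 1 (by linarith) (by linarith) le_rfl
  have e1 : ε * (s*ℓ + 1/(2*ε)) = ε*s*ℓ + 1/2 := by field_simp
  have e3 : (1 - (1-ε)) * (s*ℓ + 1/(2*ε)) = ε*s*ℓ + 1/2 := by
    rw [show (1 - (1-ε)) = ε by ring]; exact e1
  rw [energy_eq, ← hsplit1, ← hsplit2, hmid]
  rw [sub_zero] at h1
  rw [e1] at h1
  rw [e3] at h3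
  linarith

end Stmt18
namespace Stmt18

variable {ℓ : ℝ} {f₁ : ℝ → ℝ} {γ₁ γ₁' γ₂ γ₂' : ℝ → ℝ} {l : ℝ}

noncomputable def cat (l : ℝ) (γ₁ γ₂ : ℝ → ℝ) : ℝ → ℝ :=
  fun t => if t ≤ l then γ₁ (t / l) else γ₂ ((t - l) / (1 - l))

noncomputable def cat' (l : ℝ) (γ₁' γ₂' : ℝ → ℝ) : ℝ → ℝ :=
  fun t => if t ≤ l then γ₁' (t / l) / l else γ₂' ((t - l) / (1 - l)) / (1 - l)

section Cat

variable (hl0 : 0 < l) (hl1 : l < 1) (h1 : Admissible γ₁ γ₁') (h2 : Admissible γ₂ γ₂')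

include hl0 hl1 h1 in
lemma cat_I1 : IntervalIntegrable (fun t => γ₁' (t / l)) volume 0 l := by
  have base : IntervalIntegrable γ₁' volume 0 1 := adm_ii h1 le_rfl zero_le_one le_rfl
  have step := base.comp_mul_right (c := l⁻¹)
  have hne : l ≠ 0 := hl0.ne'
  simp only [zero_div, one_div, inv_inv] at step
  have : (fun x => γ₁' (x * l⁻¹)) = fun t => γ₁' (t / l) := by
    funext x; rw [← div_eq_mul_inv]
  rwa [this] at step

include hl0 hl1 h2 in
lemma cat_I2 : IntervalIntegrable (fun t => γ₂' ((t - l) / (1 - l))) volume l 1 := by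
  have base : IntervalIntegrable γ₂' volume 0 1 := adm_ii h2 le_rfl zero_le_one le_rfl
  have step := (base.comp_mul_right (c := (1 - l)⁻¹)).comp_sub_right l
  have hne : (1:ℝ) - l ≠ 0 := by linarith
  simp only [zero_div, one_div, inv_inv, zero_add] at step
  have e : (fun x => γ₂' ((x - l) * (1 - l)⁻¹)) = fun t => γ₂' ((t - l) / (1 - l)) := by
    funext x; rw [← div_eq_mul_inv]
  rw [show (1 - l) + l = 1 by ring] at step
  rwa [e] at step

include hl0 hl1 h1 h2 in
lemma cat'_integrableOn : IntegrableOn (cat' l γ₁' γ₂') (Icc 0 1) := by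
  have hne : (1:ℝ) - l ≠ 0 := by linarith
  have p1 : IntegrableOn (cat' l γ₁' γ₂') (Icc 0 l) := by
    have base : IntegrableOn (fun t => γ₁' (t / l) / l) (Icc 0 l) := by
      rw [← intervalIntegrable_iff_integrableOn_Icc_of_le hl0.le]
      exact (cat_I1 hl0 hl1 h1).div_const l
    apply base.congr
    filter_upwards [ae_restrict_mem measurableSet_Icc] with t ht
    exact (if_pos ht.2).symm
  have p2 : IntegrableOn (cat' l γ₁' γ₂') (Ioc l 1) := by
    have base : IntegrableOn (fun t => γ₂' ((t - l) / (1 - l)) / (1 - l)) (Ioc l 1) := by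
      rw [← intervalIntegrable_iff_integrableOn_Ioc_of_le hl1.le]
      exact (cat_I2 hl0 hl1 h2).div_const (1 - l)
    apply base.congr
    filter_upwards [ae_restrict_mem measurableSet_Ioc] with t ht
    exact (if_neg (not_le.2 ht.1)).symm
  have : Icc (0:ℝ) 1 ⊆ Icc 0 l ∪ Ioc l 1 := by
    intro x hx
    rcases le_or_gt x l with h | h
    · exact Or.inl ⟨hx.1, h⟩
    · exact Or.inr ⟨h, hx.2⟩
  exact (p1.union p2).mono_set this

include hl0 hl1 h1 h2 in
lemma cat_ii {a b : ℝ} (ha : 0 ≤ a) (hab : a ≤ b) (hb : b ≤ 1) :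
    IntervalIntegrable (cat' l γ₁' γ₂') volume a b := by
  rw [intervalIntegrable_iff_integrableOn_Icc_of_le hab]
  exact (cat'_integrableOn hl0 hl1 h1 h2).mono_set (Icc_subset_Icc ha hb)

include hl0 hl1 h1 in
lemma cat_int1 {t : ℝ} (h0 : 0 ≤ t) (htl : t ≤ l) :
    (∫ u in (0:ℝ)..t, cat' l γ₁' γ₂' u) = γ₁ (t / l) := by
  have hne : l ≠ 0 := hl0.ne'
  have e1 : (∫ u in (0:ℝ)..t, cat' l γ₁' γ₂' u)
      = ∫ u in (0:ℝ)..t, γ₁' (u / l) / l := by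
    apply intervalIntegral.integral_congr
    intro u hu
    rw [uIcc_of_le h0] at hu
    exact if_pos (hu.2.trans htl)
  have e2 : (∫ u in (0:ℝ)..t, γ₁' (u / l) / l) = (∫ u in (0:ℝ)..t, γ₁' (u / l)) / l :=
    intervalIntegral.integral_div l _
  have e3 := intervalIntegral.integral_comp_div (a := 0) (b := t) (f := γ₁') hne
  rw [zero_div] at e3
  have harg : t / l ∈ Icc (0:ℝ) 1 := ⟨by positivity, by rw [div_le_one hl0]; linarith⟩
  rw [e1, e2, e3, smul_eq_mul, ← h1.2.1 (t / l) harg]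
  field_simp

include hl0 hl1 h1 h2 in
lemma cat_int {t : ℝ} (h0 : 0 ≤ t) (ht1 : t ≤ 1) :
    (∫ u in (0:ℝ)..t, cat' l γ₁' γ₂' u) = cat l γ₁ γ₂ t := by
  have hne : l ≠ 0 := hl0.ne'
  have hne1 : (1:ℝ) - l ≠ 0 := by linarith
  rcases le_or_gt t l with h | h
  · rw [cat_int1 hl0 hl1 h1 h0 h, cat, if_pos h]
  · have i1 : IntervalIntegrable (cat' l γ₁' γ₂') volume 0 l :=
      cat_ii hl0 hl1 h1 h2 le_rfl hl0.le hl1.le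
    have i2 : IntervalIntegrable (cat' l γ₁' γ₂') volume l t :=
      cat_ii hl0 hl1 h1 h2 hl0.le h.le ht1
    have hsplit := intervalIntegral.integral_add_adjacent_intervals i1 i2
    have p1 : (∫ u in (0:ℝ)..l, cat' l γ₁' γ₂' u) = 0 := by
      rw [cat_int1 hl0 hl1 h1 hl0.le le_rfl, div_self hne, h1.2.2.2.2]
    have p2 : (∫ u in l..t, cat' l γ₁' γ₂' u) = γ₂ ((t - l) / (1 - l)) := by
      have e1 : (∫ u in l..t, cat' l γ₁' γ₂' u)
          = ∫ u in l..t, γ₂' ((u - l) / (1 - l)) / (1 - l) := by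
        apply intervalIntegral.integral_congr_ae (ae_of_all _ ?_)
        intro u hu
        rw [uIoc_of_le h.le] at hu
        exact if_neg (not_le.2 hu.1)
      have e2 : (∫ u in l..t, γ₂' ((u - l) / (1 - l)) / (1 - l))
          = (∫ u in l..t, γ₂' ((u - l) / (1 - l))) / (1 - l) :=
        intervalIntegral.integral_div (1 - l) _
      have e3 := intervalIntegral.integral_comp_sub_right (a := l) (b := t)
        (fun w => γ₂' (w / (1 - l))) l
      rw [sub_self] at e3
      have e4 := intervalIntegral.integral_comp_div (a := 0) (b := t - l) (f := γ₂') hne1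
      rw [zero_div] at e4
      have harg : (t - l) / (1 - l) ∈ Icc (0:ℝ) 1 := by
        constructor
        · apply div_nonneg (by linarith) (by linarith)
        · rw [div_le_one (by linarith)]; linarith
      rw [e1, e2, e3, e4, smul_eq_mul, ← h2.2.1 _ harg]
      field_simp
    rw [← hsplit, p1, p2, zero_add, cat, if_neg (not_le.2 h)]

end Cat

end Stmt18
namespace Stmt18

variable {ℓ : ℝ} {f₁ : ℝ → ℝ} {γ₁ γ₁' γ₂ γ₂' : ℝ → ℝ} {l : ℝ}

section Cat2

variable (hl0 : 0 < l) (hl1 : l < 1) (h1 : Admissible γ₁ γ₁') (h2 : Admissible γ₂ γ₂')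

include hl0 hl1 h1 h2 in
lemma cat_admissible : Admissible (cat l γ₁ γ₂) (cat' l γ₁' γ₂') := by
  have hne : l ≠ 0 := hl0.ne'
  have hne1 : (1:ℝ) - l ≠ 0 := by linarith
  refine ⟨cat'_integrableOn hl0 hl1 h1 h2,
    fun t ht => (cat_int hl0 hl1 h1 h2 ht.1 ht.2).symm, ?_, ?_, ?_⟩
  · intro t ht
    unfold cat
    split
    · rename_i h
      exact h1.2.2.1 (t / l) ⟨div_nonneg ht.1 hl0.le, by rw [div_le_one hl0]; exact h⟩
    · rename_i h
      push_neg at h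
      refine h2.2.2.1 _ ⟨div_nonneg (by linarith) (by linarith), ?_⟩
      rw [div_le_one (by linarith)]; linarith [ht.2]
  · unfold cat
    rw [if_pos hl0.le, zero_div, h1.2.2.2.1]
  · unfold cat
    rw [if_neg (not_le.2 hl1), div_self hne1, h2.2.2.2.2]

include hl0 hl1 h1 h2 in
lemma cat_sup {c : ℝ} (hsup : c ≤ sSup (γ₂ '' Icc (0:ℝ) 1)) :
    c ≤ sSup (cat l γ₁ γ₂ '' Icc (0:ℝ) 1) := by
  have hne1 : (1:ℝ) - l ≠ 0 := by linarith
  have hsub : γ₂ '' Icc (0:ℝ) 1 ⊆ cat l γ₁ γ₂ '' Icc (0:ℝ) 1 := by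
    rintro y ⟨v, hv, rfl⟩
    rcases eq_or_lt_of_le hv.1 with h0 | h0
    · refine ⟨0, ⟨le_rfl, zero_le_one⟩, ?_⟩
      rw [(cat_admissible hl0 hl1 h1 h2).2.2.2.1, ← h0, h2.2.2.2.1]
    · refine ⟨l + (1 - l) * v, ⟨by nlinarith, by nlinarith [hv.2]⟩, ?_⟩
      unfold cat
      rw [if_neg (by nlinarith)]
      congr 1
      field_simp
      ring
  have hbdd : BddAbove (cat l γ₁ γ₂ '' Icc (0:ℝ) 1) := by
    refine ⟨1, ?_⟩
    rintro y ⟨t, ht, rfl⟩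
    exact ((cat_admissible hl0 hl1 h1 h2).2.2.1 t ht).2
  have hne : (γ₂ '' Icc (0:ℝ) 1).Nonempty := ⟨γ₂ 0, mem_image_of_mem _ ⟨le_rfl, zero_le_one⟩⟩
  exact hsup.trans (csSup_le_csSup hbdd hne hsub)

include hl0 hl1 h1 h2 in
lemma cat_energy (hf : F1Hyp' ℓ f₁) (s : ℝ) :
    energy f₁ s (cat l γ₁ γ₂) (cat' l γ₁' γ₂')
      = energy f₁ (l * s) γ₁ γ₁' + energy f₁ ((1 - l) * s) γ₂ γ₂' := by
  have hne : l ≠ 0 := hl0.ne'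
  have hne1 : (1:ℝ) - l ≠ 0 := by linarith
  have hadm := cat_admissible hl0 hl1 h1 h2
  have hii := integrand_intervalIntegrable hf hadm s
  have i1 : IntervalIntegrable (integrand f₁ s (cat l γ₁ γ₂) (cat' l γ₁' γ₂')) volume 0 l := by
    rw [intervalIntegrable_iff_integrableOn_Icc_of_le hl0.le]
    rw [intervalIntegrable_iff_integrableOn_Icc_of_le zero_le_one] at hii
    exact hii.mono_set (Icc_subset_Icc le_rfl hl1.le)
  have i2 : IntervalIntegrable (integrand f₁ s (cat l γ₁ γ₂) (cat' l γ₁' γ₂')) volume l 1 := by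
    rw [intervalIntegrable_iff_integrableOn_Icc_of_le hl1.le]
    rw [intervalIntegrable_iff_integrableOn_Icc_of_le zero_le_one] at hii
    exact hii.mono_set (Icc_subset_Icc hl0.le le_rfl)
  have hsplit := intervalIntegral.integral_add_adjacent_intervals i1 i2
  have P1 : (∫ t in (0:ℝ)..l, integrand f₁ s (cat l γ₁ γ₂) (cat' l γ₁' γ₂') t)
      = energy f₁ (l * s) γ₁ γ₁' := by
    have e1 : (∫ t in (0:ℝ)..l, integrand f₁ s (cat l γ₁ γ₂) (cat' l γ₁' γ₂') t)
        = ∫ t in (0:ℝ)..l, Real.sqrt (s ^ 2 * (f₁ (Real.sqrt (γ₁ (t / l)))) ^ 2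
            + (γ₁' (t / l) / l) ^ 2 / 4) := by
      apply intervalIntegral.integral_congr
      intro u hu
      rw [uIcc_of_le hl0.le] at hu
      simp only [integrand, cat, cat', if_pos hu.2]
    have e2 := intervalIntegral.integral_comp_div (a := 0) (b := l)
      (f := fun u => Real.sqrt (s ^ 2 * (f₁ (Real.sqrt (γ₁ u))) ^ 2
        + (γ₁' u / l) ^ 2 / 4)) hne
    rw [zero_div, div_self hne] at e2
    have e3 : ∀ u : ℝ, l * Real.sqrt (s ^ 2 * (f₁ (Real.sqrt (γ₁ u))) ^ 2
        + (γ₁' u / l) ^ 2 / 4)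
        = Real.sqrt ((l * s) ^ 2 * (f₁ (Real.sqrt (γ₁ u))) ^ 2 + (γ₁' u) ^ 2 / 4) := by
      intro u
      rw [mul_sqrt_eq hl0.le]
      congr 1
      field_simp
    rw [e1, e2, smul_eq_mul, energy_eq, ← intervalIntegral.integral_const_mul]
    apply intervalIntegral.integral_congr
    intro u _
    simp only [integrand]
    exact e3 u
  have P2 : (∫ t in l..(1:ℝ), integrand f₁ s (cat l γ₁ γ₂) (cat' l γ₁' γ₂') t)
      = energy f₁ ((1 - l) * s) γ₂ γ₂' := by
    have e1 : (∫ t in l..(1:ℝ), integrand f₁ s (cat l γ₁ γ₂) (cat' l γ₁' γ₂') t)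
        = ∫ t in l..(1:ℝ), Real.sqrt (s ^ 2 * (f₁ (Real.sqrt (γ₂ ((t - l) / (1 - l))))) ^ 2
            + (γ₂' ((t - l) / (1 - l)) / (1 - l)) ^ 2 / 4) := by
      apply intervalIntegral.integral_congr_ae (ae_of_all _ ?_)
      intro u hu
      rw [uIoc_of_le hl1.le] at hu
      simp only [integrand, cat, cat', if_neg (not_le.2 hu.1)]
    have e2 := intervalIntegral.integral_comp_sub_right (a := l) (b := 1)
      (fun w => Real.sqrt (s ^ 2 * (f₁ (Real.sqrt (γ₂ (w / (1 - l))))) ^ 2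
        + (γ₂' (w / (1 - l)) / (1 - l)) ^ 2 / 4)) l
    rw [sub_self] at e2
    have e3 := intervalIntegral.integral_comp_div (a := 0) (b := 1 - l)
      (f := fun u => Real.sqrt (s ^ 2 * (f₁ (Real.sqrt (γ₂ u))) ^ 2
        + (γ₂' u / (1 - l)) ^ 2 / 4)) hne1
    rw [zero_div, div_self hne1] at e3
    have e4 : ∀ u : ℝ, (1 - l) * Real.sqrt (s ^ 2 * (f₁ (Real.sqrt (γ₂ u))) ^ 2
        + (γ₂' u / (1 - l)) ^ 2 / 4)
        = Real.sqrt (((1 - l) * s) ^ 2 * (f₁ (Real.sqrt (γ₂ u))) ^ 2 + (γ₂' u) ^ 2 / 4) := by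
      intro u
      rw [mul_sqrt_eq (by linarith)]
      congr 1
      field_simp
    rw [e1, e2, e3, smul_eq_mul, energy_eq, ← intervalIntegral.integral_const_mul]
    apply intervalIntegral.integral_congr
    intro u _
    simp only [integrand]
    exact e4 u
  rw [energy_eq, ← hsplit, P1, P2]

end Cat2

end Stmt18
namespace Stmt18

variable {ℓ ℓ₁ : ℝ} {f₁ : ℝ → ℝ}

lemma F1Hyp.toHyp' (hf : F1Hyp ℓ ℓ₁ f₁) : F1Hyp' ℓ f₁ := by
  refine ⟨hf.hl, hf.cont, hf.nonneg, ?_, hf.f11⟩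
  intro t ht
  rcases eq_or_lt_of_le ht.1 with h | h
  · rw [← h, hf.f10]
  · have := hf.anti (⟨le_rfl, zero_le_one⟩ : (0:ℝ) ∈ Icc (0:ℝ) 1) ht h
    rw [hf.f10] at this
    exact this.le

/-- The set defining `gc`. -/
def S (f₁ : ℝ → ℝ) (c s : ℝ) : Set ℝ :=
  {x | ∃ γ γ' : ℝ → ℝ, Admissible γ γ' ∧ c ≤ sSup (γ '' Icc (0:ℝ) 1) ∧
    x = energy f₁ s γ γ'}

/-- The set defining `g0`. -/
def T (f₁ : ℝ → ℝ) (s : ℝ) : Set ℝ :=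
  {x | ∃ γ γ' : ℝ → ℝ, Admissible γ γ' ∧ x = energy f₁ s γ γ'}

lemma gc_def (c s : ℝ) : gc f₁ c s = sInf (S f₁ c s) := rfl
lemma g0_def (s : ℝ) : g0 f₁ s = sInf (T f₁ s) := rfl

lemma zero_admissible : Admissible (fun _ => (0:ℝ)) (fun _ => (0:ℝ)) := by
  refine ⟨integrableOn_const (by simp) (by simp), ?_, ?_, rfl, rfl⟩
  · intro t _; simp
  · intro t _; norm_num

lemma T_nonempty (s : ℝ) : (T f₁ s).Nonempty :=
  ⟨energy f₁ s (fun _ => 0) (fun _ => 0), _, _, zero_admissible, rfl⟩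

lemma T_bdd : BddBelow (T f₁ s) := by
  refine ⟨0, ?_⟩
  rintro x ⟨γ, γ', ha, rfl⟩
  exact energy_nonneg f₁ s γ γ'

lemma g0_nonneg (s : ℝ) : 0 ≤ g0 f₁ s := by
  rw [g0_def]
  apply le_csInf (T_nonempty s)
  rintro x ⟨γ, γ', ha, rfl⟩
  exact energy_nonneg f₁ s γ γ'

variable {c : ℝ}

lemma S_nonempty (hc : c ∈ Icc (0:ℝ) 1) (s : ℝ) : (S f₁ c s).Nonempty :=
  ⟨energy f₁ s (tent c) (tent' c), _, _, tent_admissible hc, tent_sup hc, rfl⟩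

lemma S_bdd : BddBelow (S f₁ c s) := by
  refine ⟨0, ?_⟩
  rintro x ⟨γ, γ', ha, hsup, rfl⟩
  exact energy_nonneg f₁ s γ γ'

lemma gc_le (hx : x ∈ S f₁ c s) : gc f₁ c s ≤ x := csInf_le S_bdd hx

lemma le_gc (hf : F1Hyp' ℓ f₁) (hc : c ∈ Icc (0:ℝ) 1) (s : ℝ) : c ≤ gc f₁ c s := by
  rw [gc_def]
  apply le_csInf (S_nonempty hc s)
  rintro x ⟨γ, γ', ha, hsup, rfl⟩
  exact energy_ge_c hf ha hsup s

end Stmt18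
namespace Stmt18

variable {ℓ : ℝ} {f₁ : ℝ → ℝ} {c : ℝ}

lemma gc_le_linear (hf : F1Hyp' ℓ f₁) (hc : c ∈ Icc (0:ℝ) 1) {s : ℝ} (hs : 0 ≤ s) :
    gc f₁ c s ≤ c + ℓ * s :=
  (gc_le ⟨_, _, tent_admissible hc, tent_sup hc, rfl⟩).trans (tent_energy_le hf hc hs)

lemma gc_le_one (hf : F1Hyp' ℓ f₁) (hc : c ∈ Icc (0:ℝ) 1) {s : ℝ} (hs : 0 ≤ s) :
    gc f₁ c s ≤ 1 := by
  apply le_of_forall_pos_le_add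
  intro η hη
  set ε : ℝ := min (1/4) (η / (2 * ℓ * (s + 1))) with hε
  have hε0 : 0 < ε := lt_min (by norm_num) (div_pos hη (by nlinarith [hf.hl]))
  have hε2 : ε < 1/2 := lt_of_le_of_lt (min_le_left _ _) (by norm_num)
  have h1 : gc f₁ c s ≤ 1 + 2 * ε * (ℓ * s) :=
    (gc_le ⟨_, _, plat_admissible hε0 hε2, plat_sup hε0 hε2 hc.2, rfl⟩).trans
      (plat_energy_le hf hε0 hε2 hs)
  have key : 2 * ε * (ℓ * s) ≤ η := by
    have hεle : ε ≤ η / (2 * ℓ * (s + 1)) := min_le_right _ _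
    have e : 2 * (η / (2 * ℓ * (s + 1))) * (ℓ * s) = η * s / (s + 1) := by
      have hl' : ℓ ≠ 0 := hf.hl.ne'
      have hs1 : s + 1 ≠ 0 := by positivity
      field_simp
    have h2 : 2 * ε * (ℓ * s) ≤ 2 * (η / (2 * ℓ * (s + 1))) * (ℓ * s) := by
      have : (0:ℝ) ≤ ℓ * s := mul_nonneg hf.hl.le hs
      nlinarith
    rw [e] at h2
    have h3 : η * s / (s + 1) ≤ η := by
      rw [div_le_iff₀ (by positivity)]
      nlinarith
    linarith
  linarith

lemma gc_zero_eq (hf : F1Hyp' ℓ f₁) (hc : c ∈ Icc (0:ℝ) 1) : gc f₁ c 0 = c := by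
  apply le_antisymm
  · exact (gc_le ⟨_, _, tent_admissible hc, tent_sup hc, rfl⟩).trans_eq
      (tent_energy_zero hf hc)
  · exact le_gc hf hc 0

lemma gc_mono_s (hf : F1Hyp' ℓ f₁) (hc : c ∈ Icc (0:ℝ) 1) :
    MonotoneOn (gc f₁ c) (Ici 0) := by
  intro s hs t ht hst
  rw [gc_def (c := c) (s := t)]
  apply le_csInf (S_nonempty hc t)
  rintro x ⟨γ, γ', ha, hsup, rfl⟩
  exact (gc_le ⟨γ, γ', ha, hsup, rfl⟩).trans (energy_mono hf ha hs hst)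

lemma gc_mono_c (s : ℝ) {c₁ c₂ : ℝ} (hc₂ : c₂ ∈ Icc (0:ℝ) 1) (h12 : c₁ ≤ c₂) :
    gc f₁ c₁ s ≤ gc f₁ c₂ s := by
  rw [gc_def, gc_def]
  apply csInf_le_csInf S_bdd (S_nonempty hc₂ s)
  rintro x ⟨γ, γ', ha, hsup, rfl⟩
  exact ⟨γ, γ', ha, h12.trans hsup, rfl⟩

lemma gc_lip1 (hf : F1Hyp' ℓ f₁) (hc : c ∈ Icc (0:ℝ) 1) {s t : ℝ} (hs : 0 ≤ s) (ht : 0 ≤ t) :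
    gc f₁ c s ≤ gc f₁ c t + ℓ * |s - t| := by
  apply le_of_forall_pos_le_add
  intro η hη
  obtain ⟨x, hx, hlt⟩ := Real.lt_sInf_add_pos (S_nonempty hc t) hη
  obtain ⟨γ, γ', ha, hsup, rfl⟩ := hx
  have h1 : gc f₁ c s ≤ energy f₁ s γ γ' := gc_le ⟨γ, γ', ha, hsup, rfl⟩
  have h2 := energy_lip hf ha hs ht
  rw [← gc_def] at hlt
  linarith

lemma gc_lip (hf : F1Hyp' ℓ f₁) (hc : c ∈ Icc (0:ℝ) 1) {s t : ℝ} (hs : 0 ≤ s) (ht : 0 ≤ t) :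
    |gc f₁ c s - gc f₁ c t| ≤ ℓ * |s - t| := by
  rw [abs_sub_le_iff]
  constructor
  · linarith [gc_lip1 hf hc hs ht]
  · have := gc_lip1 hf hc ht hs
    rw [abs_sub_comm] at this
    linarith

lemma gc_subadd (hf : F1Hyp' ℓ f₁) (hc : c ∈ Icc (0:ℝ) 1) {s₁ s₂ : ℝ}
    (hs₁ : 0 ≤ s₁) (hs₂ : 0 ≤ s₂) :
    gc f₁ c (s₁ + s₂) ≤ g0 f₁ s₁ + gc f₁ c s₂ := by
  rcases eq_or_lt_of_le hs₁ with rfl | hs₁p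
  · rw [zero_add]
    linarith [g0_nonneg (f₁ := f₁) 0]
  rcases eq_or_lt_of_le hs₂ with rfl | hs₂p
  · rw [add_zero, gc_zero_eq hf hc]
    apply le_of_forall_pos_le_add
    intro η hη
    obtain ⟨x, hx, hlt⟩ := Real.lt_sInf_add_pos (T_nonempty (f₁ := f₁) s₁) (half_pos hη)
    obtain ⟨γ₁, γ₁', ha1, rfl⟩ := hx
    rw [← g0_def] at hlt
    set l : ℝ := max (1/2) (1 - η / (2 * (s₁ * ℓ + 1))) with hldef
    have hl0 : 0 < l := lt_of_lt_of_le (by norm_num) (le_max_left _ _)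
    have hl1 : l < 1 := by
      apply max_lt (by norm_num)
      have hpos : (0:ℝ) < 2 * (s₁ * ℓ + 1) := by nlinarith [hf.hl, mul_nonneg hs₁ hf.hl.le]
      have : 0 < η / (2 * (s₁ * ℓ + 1)) := div_pos hη hpos
      linarith
    have hmem : energy f₁ s₁ (cat l γ₁ (tent c)) (cat' l γ₁' (tent' c)) ∈ S f₁ c s₁ :=
      ⟨_, _, cat_admissible hl0 hl1 ha1 (tent_admissible hc),
        cat_sup hl0 hl1 ha1 (tent_admissible hc) (tent_sup hc), rfl⟩
    have hsplit := cat_energy hl0 hl1 ha1 (tent_admissible hc) hf s₁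
    have hA : energy f₁ (l * s₁) γ₁ γ₁' ≤ energy f₁ s₁ γ₁ γ₁' :=
      energy_mono hf ha1 (mul_nonneg hl0.le hs₁) (by nlinarith)
    have hB : energy f₁ ((1 - l) * s₁) (tent c) (tent' c) ≤ c + ℓ * ((1 - l) * s₁) :=
      tent_energy_le hf hc (by nlinarith)
    have hC : ℓ * ((1 - l) * s₁) ≤ η / 2 := by
      have h1l : 1 - l ≤ η / (2 * (s₁ * ℓ + 1)) := by
        have := le_max_right (1/2 : ℝ) (1 - η / (2 * (s₁ * ℓ + 1)))
        linarith
      have k1 : η / (2 * (s₁ * ℓ + 1)) * (ℓ * s₁) ≤ η / 2 := by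
        have hpos : (0:ℝ) < 2 * (s₁ * ℓ + 1) := by nlinarith [hf.hl, mul_nonneg hs₁ hf.hl.le]
        rw [div_mul_eq_mul_div, div_le_iff₀ hpos]
        nlinarith [hη.le, mul_nonneg hs₁ hf.hl.le]
      have k2 : (1 - l) * (ℓ * s₁) ≤ η / (2 * (s₁ * ℓ + 1)) * (ℓ * s₁) :=
        mul_le_mul_of_nonneg_right h1l (mul_nonneg hf.hl.le hs₁)
      nlinarith
    have := gc_le hmem
    rw [hsplit] at this
    linarith
  · apply le_of_forall_pos_le_add
    intro η hη
    obtain ⟨x, hx, hlt1⟩ := Real.lt_sInf_add_pos (T_nonempty (f₁ := f₁) s₁) (half_pos hη)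
    obtain ⟨γ₁, γ₁', ha1, rfl⟩ := hx
    rw [← g0_def] at hlt1
    obtain ⟨y, hy, hlt2⟩ := Real.lt_sInf_add_pos (S_nonempty (f₁ := f₁) hc s₂) (half_pos hη)
    obtain ⟨γ₂, γ₂', ha2, hsup2, rfl⟩ := hy
    rw [← gc_def] at hlt2
    set l : ℝ := s₁ / (s₁ + s₂) with hldef
    have hsum : 0 < s₁ + s₂ := by linarith
    have hl0 : 0 < l := by positivity
    have hl1 : l < 1 := by
      rw [hldef, div_lt_one hsum]
      linarith
    have e1 : l * (s₁ + s₂) = s₁ := by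
      rw [hldef]; field_simp
    have e2 : (1 - l) * (s₁ + s₂) = s₂ := by
      rw [hldef]; field_simp; ring
    have hmem : energy f₁ (s₁ + s₂) (cat l γ₁ γ₂) (cat' l γ₁' γ₂') ∈ S f₁ c (s₁ + s₂) :=
      ⟨_, _, cat_admissible hl0 hl1 ha1 ha2, cat_sup hl0 hl1 ha1 ha2 hsup2, rfl⟩
    have hsplit := cat_energy hl0 hl1 ha1 ha2 hf (s₁ + s₂)
    rw [e1, e2] at hsplit
    have := gc_le hmem
    rw [hsplit] at this
    linarith

lemma gc_tendsto (hf : F1Hyp' ℓ f₁) (hc : c ∈ Icc (0:ℝ) 1) (hcpos : 0 < c) :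
    Tendsto (fun s => (gc f₁ c s - c) / s) (nhdsWithin 0 (Ioi 0)) (nhds 0) := by
  apply squeeze_zero' (g := fun s => s * (ℓ ^ 2 / (2 * c)))
  · filter_upwards [self_mem_nhdsWithin] with s hs
    have hs' : (0:ℝ) < s := hs
    exact div_nonneg (sub_nonneg.2 (le_gc hf hc s)) hs'.le
  · filter_upwards [self_mem_nhdsWithin] with s hs
    have hs' : (0:ℝ) < s := hs
    have h1 : gc f₁ c s ≤ c + s ^ 2 * ℓ ^ 2 / (2 * c) :=
      (gc_le ⟨_, _, tent_admissible hc, tent_sup hc, rfl⟩).trans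
        (tent_energy_quad hf hcpos hc.2 s)
    rw [div_le_iff₀ hs']
    have e : s * (ℓ ^ 2 / (2 * c)) * s = s ^ 2 * ℓ ^ 2 / (2 * c) := by
      field_simp
    rw [e]
    linarith
  · have h := (tendsto_id : Tendsto id (nhds (0:ℝ)) (nhds 0)).mul_const (ℓ ^ 2 / (2 * c))
    rw [zero_mul] at h
    exact (h.mono_left nhdsWithin_le_nhds : _)

end Stmt18


/-- basic properties of the constrained density `g_c`, for every `c ∈ [0,1]`:
(a) `g_c(0) = c`; (b) `c ≤ g_c(s) ≤ min(1, c + ℓ s)`; (c) monotone in `s` and in `c`;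
(d) `ℓ`-Lipschitz in `s`; (e) `g_c(s₁+s₂) ≤ g₀(s₁) + g_c(s₂)`;
(f) if `c > 0` then `(g_c(s) − c)/s → 0` as `s → 0⁺`. -/
theorem stmt_18 (ℓ ℓ₁ : ℝ) (f₁ : ℝ → ℝ) (hf : F1Hyp ℓ ℓ₁ f₁)
    (c : ℝ) (hc : c ∈ Icc (0:ℝ) 1) :
    gc f₁ c 0 = c ∧
    (∀ s : ℝ, 0 ≤ s → c ≤ gc f₁ c s ∧ gc f₁ c s ≤ min 1 (c + ℓ * s)) ∧
    MonotoneOn (gc f₁ c) (Ici 0) ∧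
    (∀ s : ℝ, 0 ≤ s → ∀ c₁ ∈ Icc (0:ℝ) 1, ∀ c₂ ∈ Icc (0:ℝ) 1, c₁ ≤ c₂ →
      gc f₁ c₁ s ≤ gc f₁ c₂ s) ∧
    (∀ s t : ℝ, 0 ≤ s → 0 ≤ t → |gc f₁ c s - gc f₁ c t| ≤ ℓ * |s - t|) ∧
    (∀ s₁ s₂ : ℝ, 0 ≤ s₁ → 0 ≤ s₂ → gc f₁ c (s₁ + s₂) ≤ g0 f₁ s₁ + gc f₁ c s₂) ∧
    (0 < c → Tendsto (fun s => (gc f₁ c s - c) / s) (nhdsWithin 0 (Ioi 0)) (nhds 0)) := by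
  have hf' : Stmt18.F1Hyp' ℓ f₁ := Stmt18.F1Hyp.toHyp' hf
  refine ⟨Stmt18.gc_zero_eq hf' hc, ?_, Stmt18.gc_mono_s hf' hc, ?_, ?_, ?_, ?_⟩
  · intro s hs
    exact ⟨Stmt18.le_gc hf' hc s,
      le_min (Stmt18.gc_le_one hf' hc hs) (Stmt18.gc_le_linear hf' hc hs)⟩
  · intro s hs c₁ hc₁ c₂ hc₂ h12
    exact Stmt18.gc_mono_c s hc₂ h12
  · intro s t hs ht
    exact Stmt18.gc_lip hf' hc hs ht
  · intro s₁ s₂ hs₁ hs₂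
    exact Stmt18.gc_subadd hf' hc hs₁ hs₂
  · intro hcpos
    exact Stmt18.gc_tendsto hf' hc hcpos
end

section
/- Strict subadditivity of the constrained density against the pristine density: for every c ∈ (0,1], every s₁ > 0 and every s₂ ≥ 0, one has g_c(s₁ + s₂) < g₀(s₁) + g_c(s₂). -/
open MeasureTheory Set Filter

namespace Stmt19

/-- The energy integrand. -/
noncomputable def eI (f₁ : ℝ → ℝ) (s : ℝ) (γ γ' : ℝ → ℝ) (t : ℝ) : ℝ :=
  Real.sqrt (s ^ 2 * (f₁ (Real.sqrt (γ t))) ^ 2 + (γ' t) ^ 2 / 4)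

lemma energy_eq (f₁ : ℝ → ℝ) (s : ℝ) (γ γ' : ℝ → ℝ) :
    energy f₁ s γ γ' = ∫ t in (0:ℝ)..1, eI f₁ s γ γ' t := rfl

variable {ℓ ℓ₁ : ℝ} {f₁ : ℝ → ℝ}

lemma f1_le (hf : F1Hyp ℓ ℓ₁ f₁) {x : ℝ} (hx : x ∈ Icc (0:ℝ) 1) : f₁ x ≤ ℓ := by
  rcases eq_or_lt_of_le hx.1 with h | h
  · rw [← h, hf.f10]
  · rw [← hf.f10]
    exact (hf.anti (left_mem_Icc.2 zero_le_one) hx h).le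

lemma sqrt_mem_Icc {x : ℝ} (hx : x ∈ Icc (0:ℝ) 1) : Real.sqrt x ∈ Icc (0:ℝ) 1 :=
  ⟨Real.sqrt_nonneg x, by
    rw [show (1:ℝ) = Real.sqrt 1 by simp]
    exact Real.sqrt_le_sqrt hx.2⟩

/-- Continuity of the profile from the FTC representation. -/
lemma adm_cont {γ γ' : ℝ → ℝ} (h : Admissible γ γ') : ContinuousOn γ (Icc 0 1) := by
  have h1 : ContinuousOn (fun x => ∫ t in Ioc (0:ℝ) x, γ' t) (Icc 0 1) :=
    intervalIntegral.continuousOn_primitive h.1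
  apply ContinuousOn.congr h1
  intro t ht
  rw [h.2.1 t ht, intervalIntegral.integral_of_le ht.1]

/-- Composite `t ↦ f₁ (√(γ t))` is continuous on `[0,1]`. -/
lemma comp_cont (hf : F1Hyp ℓ ℓ₁ f₁) {γ : ℝ → ℝ} (hc : ContinuousOn γ (Icc 0 1))
    (hr : ∀ t ∈ Icc (0:ℝ) 1, γ t ∈ Icc (0:ℝ) 1) :
    ContinuousOn (fun t => f₁ (Real.sqrt (γ t))) (Icc 0 1) := by
  apply hf.cont.comp (Real.continuous_sqrt.comp_continuousOn hc)
  intro t ht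
  exact sqrt_mem_Icc (hr t ht)

/-- Integrability of the energy integrand. -/
lemma eI_integrableOn (hf : F1Hyp ℓ ℓ₁ f₁) {γ γ' : ℝ → ℝ}
    (hc : ContinuousOn γ (Icc 0 1)) (hr : ∀ t ∈ Icc (0:ℝ) 1, γ t ∈ Icc (0:ℝ) 1)
    (hint : IntegrableOn γ' (Icc 0 1)) (s : ℝ) :
    IntegrableOn (eI f₁ s γ γ') (Icc 0 1) := by
  have hcomp := comp_cont hf hc hr
  have hmeas : AEStronglyMeasurable (eI f₁ s γ γ') (volume.restrict (Icc 0 1)) := by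
    unfold eI
    simp only [div_eq_mul_inv]
    apply Continuous.comp_aestronglyMeasurable (g := Real.sqrt) Real.continuous_sqrt
    apply AEStronglyMeasurable.add
    · exact (aestronglyMeasurable_const.mul
        ((hcomp.aestronglyMeasurable measurableSet_Icc).pow 2))
    · exact (hint.aestronglyMeasurable.pow 2).mul_const _
  have hbound : IntegrableOn (fun t => |s| * ℓ + |γ' t| / 2) (Icc 0 1) := by
    apply Integrable.add
    · exact integrableOn_const measure_Icc_lt_top.ne
    · exact hint.abs.div_const 2
  apply Integrable.mono' hbound hmeas
  rw [ae_restrict_iff' measurableSet_Icc]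
  filter_upwards with t
  intro ht
  have h1 : 0 ≤ f₁ (Real.sqrt (γ t)) := hf.nonneg _ (sqrt_mem_Icc (hr t ht))
  have h2 : f₁ (Real.sqrt (γ t)) ≤ ℓ := f1_le hf (sqrt_mem_Icc (hr t ht))
  have h3 : (0:ℝ) ≤ s ^ 2 * (f₁ (Real.sqrt (γ t))) ^ 2 + (γ' t) ^ 2 / 4 := by positivity
  simp only [eI, Real.norm_eq_abs]
  rw [abs_of_nonneg (Real.sqrt_nonneg _)]
  have : s ^ 2 * (f₁ (Real.sqrt (γ t))) ^ 2 + (γ' t) ^ 2 / 4 ≤ (|s| * ℓ + |γ' t| / 2) ^ 2 := by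
    have hsa : s ^ 2 * (f₁ (Real.sqrt (γ t))) ^ 2 ≤ (|s| * ℓ) ^ 2 := by
      have : (f₁ (Real.sqrt (γ t))) ^ 2 ≤ ℓ ^ 2 := by nlinarith
      calc s ^ 2 * (f₁ (Real.sqrt (γ t))) ^ 2 ≤ s ^ 2 * ℓ ^ 2 := by nlinarith [sq_nonneg s]
        _ = (|s| * ℓ) ^ 2 := by rw [mul_pow, sq_abs]
    have hsb : (γ' t) ^ 2 / 4 = (|γ' t| / 2) ^ 2 := by rw [div_pow, sq_abs]; norm_num
    nlinarith [mul_nonneg (mul_nonneg (abs_nonneg s) hf.hl.le) (abs_nonneg (γ' t))]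
  have hnn : 0 ≤ |s| * ℓ + |γ' t| / 2 := by
    nlinarith [abs_nonneg s, abs_nonneg (γ' t), hf.hl.le, mul_nonneg (abs_nonneg s) hf.hl.le]
  calc Real.sqrt (s ^ 2 * (f₁ (Real.sqrt (γ t))) ^ 2 + (γ' t) ^ 2 / 4)
      ≤ Real.sqrt ((|s| * ℓ + |γ' t| / 2) ^ 2) := Real.sqrt_le_sqrt this
    _ = |s| * ℓ + |γ' t| / 2 := Real.sqrt_sq hnn

lemma eI_intervalIntegrable (hf : F1Hyp ℓ ℓ₁ f₁) {γ γ' : ℝ → ℝ}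
    (hc : ContinuousOn γ (Icc 0 1)) (hr : ∀ t ∈ Icc (0:ℝ) 1, γ t ∈ Icc (0:ℝ) 1)
    (hint : IntegrableOn γ' (Icc 0 1)) (s : ℝ) {a b : ℝ} (ha : a ∈ Icc (0:ℝ) 1)
    (hb : b ∈ Icc (0:ℝ) 1) :
    IntervalIntegrable (eI f₁ s γ γ') volume a b := by
  apply IntegrableOn.intervalIntegrable
  exact (eI_integrableOn hf hc hr hint s).mono_set (uIcc_subset_Icc ha hb)

lemma adm_eI_integrable (hf : F1Hyp ℓ ℓ₁ f₁) {γ γ' : ℝ → ℝ} (h : Admissible γ γ') (s : ℝ)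
    {a b : ℝ} (ha : a ∈ Icc (0:ℝ) 1) (hb : b ∈ Icc (0:ℝ) 1) :
    IntervalIntegrable (eI f₁ s γ γ') volume a b :=
  eI_intervalIntegrable hf (adm_cont h) (fun t ht => ⟨(h.2.2.1 t ht).1, (h.2.2.1 t ht).2⟩) h.1 s ha hb

lemma adm_gamma'_II {γ γ' : ℝ → ℝ} (h : Admissible γ γ') {a b : ℝ} (ha : a ∈ Icc (0:ℝ) 1)
    (hb : b ∈ Icc (0:ℝ) 1) : IntervalIntegrable γ' volume a b :=
  IntegrableOn.intervalIntegrable (h.1.mono_set (uIcc_subset_Icc ha hb))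

lemma eI_nonneg (f₁ : ℝ → ℝ) (s : ℝ) (γ γ' : ℝ → ℝ) (t : ℝ) : 0 ≤ eI f₁ s γ γ' t :=
  Real.sqrt_nonneg _

lemma energy_nonneg (f₁ : ℝ → ℝ) (s : ℝ) (γ γ' : ℝ → ℝ) : 0 ≤ energy f₁ s γ γ' := by
  rw [energy_eq]
  apply intervalIntegral.integral_nonneg zero_le_one
  intro t _
  exact eI_nonneg _ _ _ _ _


/-- Pointwise: `|γ'|/2 ≤ eI`. -/
lemma abs_div_two_le_eI (f₁ : ℝ → ℝ) (s : ℝ) (γ γ' : ℝ → ℝ) (t : ℝ) :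
    |γ' t| / 2 ≤ eI f₁ s γ γ' t := by
  unfold eI
  have h1 : |γ' t| / 2 = Real.sqrt ((γ' t) ^ 2 / 4) := by
    rw [show (γ' t) ^ 2 / 4 = (|γ' t| / 2) ^ 2 by rw [div_pow, sq_abs]; norm_num,
      Real.sqrt_sq (by positivity)]
  rw [h1]
  apply Real.sqrt_le_sqrt
  nlinarith [sq_nonneg (s * f₁ (Real.sqrt (γ t)))]

/-- Variation estimate on a subinterval. -/
lemma abs_int_le (hf : F1Hyp ℓ ℓ₁ f₁) {γ γ' : ℝ → ℝ} (h : Admissible γ γ') (s : ℝ)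
    {a b : ℝ} (ha : a ∈ Icc (0:ℝ) 1) (hb : b ∈ Icc (0:ℝ) 1) (hab : a ≤ b) :
    |∫ t in a..b, γ' t| ≤ 2 * ∫ t in a..b, eI f₁ s γ γ' t := by
  calc |∫ t in a..b, γ' t| ≤ ∫ t in a..b, |γ' t| :=
        intervalIntegral.abs_integral_le_integral_abs hab
    _ ≤ ∫ t in a..b, 2 * eI f₁ s γ γ' t := by
        apply intervalIntegral.integral_mono_on hab ((adm_gamma'_II h ha hb).abs)
          ((adm_eI_integrable hf h s ha hb).const_mul 2)
        intro x _
        linarith [abs_div_two_le_eI f₁ s γ γ' x]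
    _ = 2 * ∫ t in a..b, eI f₁ s γ γ' t := intervalIntegral.integral_const_mul 2 _

/-- The total variation bound: the energy dominates every value of the profile. -/
lemma energy_ge_val (hf : F1Hyp ℓ ℓ₁ f₁) {γ γ' : ℝ → ℝ} (h : Admissible γ γ') (s : ℝ)
    {t₀ : ℝ} (ht₀ : t₀ ∈ Icc (0:ℝ) 1) : γ t₀ ≤ energy f₁ s γ γ' := by
  have h01 : (0:ℝ) ∈ Icc (0:ℝ) 1 := left_mem_Icc.2 zero_le_one
  have h11 : (1:ℝ) ∈ Icc (0:ℝ) 1 := right_mem_Icc.2 zero_le_one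
  have hsplit : energy f₁ s γ γ' =
      (∫ t in (0:ℝ)..t₀, eI f₁ s γ γ' t) + ∫ t in t₀..1, eI f₁ s γ γ' t := by
    rw [energy_eq, ← intervalIntegral.integral_add_adjacent_intervals
      (adm_eI_integrable hf h s h01 ht₀) (adm_eI_integrable hf h s ht₀ h11)]
  have h1 : γ t₀ ≤ 2 * ∫ t in (0:ℝ)..t₀, eI f₁ s γ γ' t := by
    have := abs_int_le hf h s h01 ht₀ ht₀.1
    rw [← h.2.1 t₀ ht₀] at this
    exact (le_abs_self _).trans this
  have h2 : γ t₀ ≤ 2 * ∫ t in t₀..1, eI f₁ s γ γ' t := by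
    have hsub : ∫ t in t₀..(1:ℝ), γ' t = γ 1 - γ t₀ := by
      rw [h.2.1 1 h11, h.2.1 t₀ ht₀]
      rw [← intervalIntegral.integral_interval_sub_left
        (adm_gamma'_II h h01 h11) (adm_gamma'_II h h01 ht₀)]
    have := abs_int_le hf h s ht₀ h11 ht₀.2
    rw [hsub, h.2.2.2.2] at this
    calc γ t₀ = |0 - γ t₀| := by
          rw [zero_sub, abs_neg, abs_of_nonneg (h.2.2.1 t₀ ht₀).1]
      _ ≤ 2 * ∫ t in t₀..1, eI f₁ s γ γ' t := this
  linarith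

/-- `γ ≡ 0` is admissible. -/
lemma adm_zero : Admissible (fun _ => (0:ℝ)) (fun _ => (0:ℝ)) := by
  refine ⟨integrableOn_const measure_Icc_lt_top.ne, ?_, ?_, rfl, rfl⟩
  · intro t _; simp
  · intro t _; norm_num

lemma g0_set_nonempty (f₁ : ℝ → ℝ) (s : ℝ) :
    {x | ∃ γ γ' : ℝ → ℝ, Admissible γ γ' ∧ x = energy f₁ s γ γ'}.Nonempty :=
  ⟨_, ⟨_, _, adm_zero, rfl⟩⟩

lemma g0_set_bddBelow (f₁ : ℝ → ℝ) (s : ℝ) :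
    BddBelow {x | ∃ γ γ' : ℝ → ℝ, Admissible γ γ' ∧ x = energy f₁ s γ γ'} := by
  refine ⟨0, fun x hx => ?_⟩
  obtain ⟨γ, γ', -, rfl⟩ := hx
  exact energy_nonneg f₁ s γ γ'

lemma gc_set_bddBelow (f₁ : ℝ → ℝ) (c s : ℝ) :
    BddBelow {x | ∃ γ γ' : ℝ → ℝ, Admissible γ γ' ∧ c ≤ sSup (γ '' Icc (0:ℝ) 1) ∧
      x = energy f₁ s γ γ'} := by
  refine ⟨0, fun x hx => ?_⟩
  obtain ⟨γ, γ', -, -, rfl⟩ := hx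
  exact energy_nonneg f₁ s γ γ'

lemma g0_le_energy {γ γ' : ℝ → ℝ} (h : Admissible γ γ') (s : ℝ) :
    g0 f₁ s ≤ energy f₁ s γ γ' :=
  csInf_le (g0_set_bddBelow f₁ s) ⟨γ, γ', h, rfl⟩

lemma gc_le_energy {γ γ' : ℝ → ℝ} (h : Admissible γ γ') {c : ℝ}
    (hc : c ≤ sSup (γ '' Icc (0:ℝ) 1)) (s : ℝ) :
    gc f₁ c s ≤ energy f₁ s γ γ' :=
  csInf_le (gc_set_bddBelow f₁ c s) ⟨γ, γ', h, hc, rfl⟩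

lemma g0_le_lin (hf : F1Hyp ℓ ℓ₁ f₁) {s : ℝ} (hs : 0 ≤ s) : g0 f₁ s ≤ s * ℓ := by
  have : energy f₁ s (fun _ => (0:ℝ)) (fun _ => (0:ℝ)) = s * ℓ := by
    rw [energy_eq]
    have : ∀ t : ℝ, eI f₁ s (fun _ => (0:ℝ)) (fun _ => (0:ℝ)) t = s * ℓ := by
      intro t
      unfold eI
      rw [Real.sqrt_zero, hf.f10]
      rw [show s ^ 2 * ℓ ^ 2 + 0 ^ 2 / 4 = (s * ℓ) ^ 2 by ring,
        Real.sqrt_sq (mul_nonneg hs hf.hl.le)]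
    simp only [this]
    simp
  exact this ▸ g0_le_energy adm_zero s

/-- The "full crack" profile: ramp up to 1, plateau, ramp down. -/
lemma crack (hf : F1Hyp ℓ ℓ₁ f₁) {δ : ℝ} (hδ0 : 0 < δ) (hδ : δ < 1/2) {S : ℝ} (hS : 0 ≤ S) :
    ∃ γ γ' : ℝ → ℝ, Admissible γ γ' ∧ (1:ℝ) ≤ sSup (γ '' Icc (0:ℝ) 1) ∧
      energy f₁ S γ γ' ≤ 1 + 2 * δ * S * ℓ := by
  have hδ1 : δ ∈ Icc (0:ℝ) 1 := ⟨hδ0.le, by linarith⟩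
  have hδ2 : (1:ℝ) - δ ∈ Icc (0:ℝ) 1 := ⟨by linarith, by linarith⟩
  have h01 : (0:ℝ) ∈ Icc (0:ℝ) 1 := left_mem_Icc.2 zero_le_one
  have h11 : (1:ℝ) ∈ Icc (0:ℝ) 1 := right_mem_Icc.2 zero_le_one
  set D := fun u : ℝ => if u ≤ δ then 1/δ else if u ≤ 1-δ then 0 else -(1/δ) with hDdef
  set G := fun t : ℝ => if t ≤ δ then t/δ else if t ≤ 1-δ then 1 else (1-t)/δ with hGdef
  have hDbd : ∀ u, |D u| ≤ 1/δ := by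
    intro u
    simp only [hDdef]
    split_ifs
    · rw [abs_of_nonneg (by positivity)]
    · rw [abs_zero]; positivity
    · rw [abs_neg, abs_of_nonneg (by positivity)]
  have hDmeas : Measurable D := by
    apply Measurable.ite (measurableSet_le measurable_id measurable_const) measurable_const
    exact Measurable.ite (measurableSet_le measurable_id measurable_const) measurable_const
      measurable_const
  have hDint : IntegrableOn D (Icc 0 1) := by
    apply Integrable.mono' (g := fun _ => 1/δ) (integrableOn_const measure_Icc_lt_top.ne)
      (hDmeas.aestronglyMeasurable.restrict)
    filter_upwards with u using hDbd u
  have hDII : ∀ a b : ℝ, a ∈ Icc (0:ℝ) 1 → b ∈ Icc (0:ℝ) 1 → IntervalIntegrable D volume a b :=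
    fun a b ha hb => IntegrableOn.intervalIntegrable (hDint.mono_set (uIcc_subset_Icc ha hb))
  have hint0δ : ∫ u in (0:ℝ)..δ, D u = 1 := by
    have : EqOn D (fun _ => 1/δ) (uIcc 0 δ) := by
      intro u hu
      rw [uIcc_of_le hδ0.le] at hu
      simp only [hDdef]
      rw [if_pos hu.2]
    rw [intervalIntegral.integral_congr this, intervalIntegral.integral_const, smul_eq_mul, sub_zero]
    field_simp
  have hintδm : ∀ t : ℝ, δ < t → t ≤ 1 - δ → ∫ u in δ..t, D u = 0 := by
    intro t h1 h2
    have : ∫ u in δ..t, D u = ∫ u in δ..t, (0:ℝ) := by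
      apply intervalIntegral.integral_congr_ae
      filter_upwards with u hu
      rw [uIoc_of_le h1.le] at hu
      simp only [hDdef]
      rw [if_neg (not_le.2 hu.1), if_pos (hu.2.trans h2)]
    rw [this, intervalIntegral.integral_zero]
  have hrep : ∀ t ∈ Icc (0:ℝ) 1, G t = ∫ u in (0:ℝ)..t, D u := by
    intro t ht
    rcases le_or_gt t δ with h1 | h1
    · have : EqOn D (fun _ => 1/δ) (uIcc 0 t) := by
        intro u hu
        rw [uIcc_of_le ht.1] at hu
        simp only [hDdef]
        rw [if_pos (hu.2.trans h1)]
      rw [intervalIntegral.integral_congr this, intervalIntegral.integral_const, smul_eq_mul]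
      simp only [hGdef]
      rw [if_pos h1]
      ring
    · have hsplit1 : ∫ u in (0:ℝ)..t, D u = (∫ u in (0:ℝ)..δ, D u) + ∫ u in δ..t, D u :=
        (intervalIntegral.integral_add_adjacent_intervals (hDII 0 δ h01 hδ1)
          (hDII δ t hδ1 ht)).symm
      rcases le_or_gt t (1-δ) with h2 | h2
      · rw [hsplit1, hint0δ, hintδm t h1 h2]
        simp only [hGdef]
        rw [if_neg (not_le.2 h1), if_pos h2]
        norm_num
      · have hsplit2 : ∫ u in δ..t, D u = (∫ u in δ..(1-δ), D u) + ∫ u in (1-δ)..t, D u :=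
          (intervalIntegral.integral_add_adjacent_intervals (hDII δ (1-δ) hδ1 hδ2)
            (hDII (1-δ) t hδ2 ht)).symm
        have hlast : ∫ u in (1-δ)..t, D u = (t - (1-δ)) * (-(1/δ)) := by
          have : ∫ u in (1-δ)..t, D u = ∫ u in (1-δ)..t, (fun _ => -(1/δ)) u := by
            apply intervalIntegral.integral_congr_ae
            filter_upwards with u hu
            rw [uIoc_of_le h2.le] at hu
            simp only [hDdef]
            rw [if_neg, if_neg (not_le.2 hu.1)]
            push_neg
            linarith [hu.1]
          rw [this, intervalIntegral.integral_const, smul_eq_mul]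
        rw [hsplit1, hsplit2, hint0δ, hintδm (1-δ) (by linarith) le_rfl, hlast]
        simp only [hGdef]
        rw [if_neg (by push_neg; linarith), if_neg (not_le.2 h2)]
        field_simp
        ring
  have hGbd : ∀ t ∈ Icc (0:ℝ) 1, 0 ≤ G t ∧ G t ≤ 1 := by
    intro t ht
    simp only [hGdef]
    split_ifs with e1 e2
    · exact ⟨div_nonneg ht.1 hδ0.le, by rw [div_le_one hδ0]; exact e1⟩
    · norm_num
    · push_neg at e1 e2
      constructor
      · apply div_nonneg _ hδ0.le
        linarith [ht.2]
      · rw [div_le_one hδ0]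
        linarith
  have hG0 : G 0 = 0 := by
    simp only [hGdef]
    rw [if_pos hδ0.le]
    simp
  have hG1 : G 1 = 0 := by
    simp only [hGdef]
    rw [if_neg (by push_neg; linarith), if_neg (by push_neg; linarith)]
    simp
  have hadm : Admissible G D := ⟨hDint, hrep, hGbd, hG0, hG1⟩
  have hGδ : G δ = 1 := by
    simp only [hGdef]
    rw [if_pos le_rfl, div_self hδ0.ne']
  refine ⟨G, D, hadm, ?_, ?_⟩
  · exact le_csSup ⟨1, fun y hy => by
      obtain ⟨t, ht, rfl⟩ := hy
      exact (hGbd t ht).2⟩ ⟨δ, hδ1, hGδ⟩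
  · have hsplit : energy f₁ S G D = (∫ t in (0:ℝ)..δ, eI f₁ S G D t)
        + (∫ t in δ..(1-δ), eI f₁ S G D t) + ∫ t in (1-δ)..1, eI f₁ S G D t := by
      have e1 : (∫ t in (0:ℝ)..(1-δ), eI f₁ S G D t) + ∫ t in (1-δ)..1, eI f₁ S G D t
          = ∫ t in (0:ℝ)..1, eI f₁ S G D t :=
        intervalIntegral.integral_add_adjacent_intervals
          (adm_eI_integrable hf hadm S h01 hδ2) (adm_eI_integrable hf hadm S hδ2 h11)
      have e2 : (∫ t in (0:ℝ)..δ, eI f₁ S G D t) + ∫ t in δ..(1-δ), eI f₁ S G D t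
          = ∫ t in (0:ℝ)..(1-δ), eI f₁ S G D t :=
        intervalIntegral.integral_add_adjacent_intervals
          (adm_eI_integrable hf hadm S h01 hδ1) (adm_eI_integrable hf hadm S hδ1 hδ2)
      rw [energy_eq, ← e1, ← e2]
    have hmid : ∫ t in δ..(1-δ), eI f₁ S G D t = 0 := by
      have : ∫ t in δ..(1-δ), eI f₁ S G D t = ∫ t in δ..(1-δ), (0:ℝ) := by
        apply intervalIntegral.integral_congr_ae
        filter_upwards with u hu
        rw [uIoc_of_le (by linarith : δ ≤ 1-δ)] at hu
        unfold eI
        simp only [hGdef, hDdef]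
        rw [if_neg (not_le.2 hu.1), if_pos hu.2, if_neg (not_le.2 hu.1), if_pos hu.2]
        rw [Real.sqrt_one, hf.f11]
        norm_num
      rw [this, intervalIntegral.integral_zero]
    have hramp : ∀ u ∈ Icc (0:ℝ) 1, eI f₁ S G D u ≤ S * ℓ + 1/(2*δ) := by
      intro u hu
      unfold eI
      have ha0 : 0 ≤ f₁ (Real.sqrt (G u)) := hf.nonneg _ (sqrt_mem_Icc ⟨(hGbd u hu).1, (hGbd u hu).2⟩)
      have ha1 : f₁ (Real.sqrt (G u)) ≤ ℓ := f1_le hf (sqrt_mem_Icc ⟨(hGbd u hu).1, (hGbd u hu).2⟩)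
      have hd : (D u)^2 ≤ (1/δ)^2 := by
        have := hDbd u
        nlinarith [abs_nonneg (D u), sq_abs (D u)]
      have hnn : (0:ℝ) ≤ S * ℓ + 1/(2*δ) := by
        have h1 := mul_nonneg hS hf.hl.le
        have h2 : (0:ℝ) < 1/(2*δ) := by positivity
        linarith
      rw [show S * ℓ + 1/(2*δ) = Real.sqrt ((S * ℓ + 1/(2*δ))^2) by rw [Real.sqrt_sq hnn]]
      apply Real.sqrt_le_sqrt
      have h1 : S ^ 2 * (f₁ (Real.sqrt (G u))) ^ 2 ≤ (S*ℓ)^2 := by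
        have hsq : (f₁ (Real.sqrt (G u))) ^ 2 ≤ ℓ ^ 2 := by nlinarith
        calc S ^ 2 * (f₁ (Real.sqrt (G u))) ^ 2 ≤ S ^ 2 * ℓ ^ 2 := by nlinarith [sq_nonneg S]
          _ = (S*ℓ)^2 := by ring
      have h2 : (D u)^2/4 ≤ (1/(2*δ))^2 := by
        rw [show (1/(2*δ))^2 = (1/δ)^2/4 by ring]
        linarith
      nlinarith [mul_nonneg (mul_nonneg hS hf.hl.le) (le_of_lt (by positivity : (0:ℝ) < 1/(2*δ)))]
    have hr1 : ∫ t in (0:ℝ)..δ, eI f₁ S G D t ≤ δ * S * ℓ + 1/2 := by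
      calc ∫ t in (0:ℝ)..δ, eI f₁ S G D t ≤ ∫ _t in (0:ℝ)..δ, (S * ℓ + 1/(2*δ)) := by
            apply intervalIntegral.integral_mono_on hδ0.le
              (adm_eI_integrable hf hadm S h01 hδ1)
              (intervalIntegrable_const)
            intro x hx
            exact hramp x ⟨hx.1, hx.2.trans hδ1.2⟩
        _ = δ * S * ℓ + 1/2 := by
            rw [intervalIntegral.integral_const, smul_eq_mul]
            field_simp
            ring
    have hr2 : ∫ t in (1-δ)..1, eI f₁ S G D t ≤ δ * S * ℓ + 1/2 := by
      calc ∫ t in (1-δ)..1, eI f₁ S G D t ≤ ∫ _t in (1-δ)..(1:ℝ), (S * ℓ + 1/(2*δ)) := by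
            apply intervalIntegral.integral_mono_on (by linarith)
              (adm_eI_integrable hf hadm S hδ2 h11)
              (intervalIntegrable_const)
            intro x hx
            exact hramp x ⟨le_trans hδ2.1 hx.1, hx.2⟩
        _ = δ * S * ℓ + 1/2 := by
            rw [intervalIntegral.integral_const, smul_eq_mul]
            field_simp
            ring
    rw [hsplit, hmid]
    linarith

lemma gc_set_nonempty (hf : F1Hyp ℓ ℓ₁ f₁) {c : ℝ} (hc1 : c ≤ 1) {S : ℝ} (hS : 0 ≤ S) :
    {x | ∃ γ γ' : ℝ → ℝ, Admissible γ γ' ∧ c ≤ sSup (γ '' Icc (0:ℝ) 1) ∧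
      x = energy f₁ S γ γ'}.Nonempty := by
  obtain ⟨γ, γ', hadm, hsup, -⟩ := crack hf (show (0:ℝ) < 1/4 by norm_num) (by norm_num) hS
  exact ⟨_, γ, γ', hadm, hc1.trans hsup, rfl⟩

lemma gc_ge_c (hf : F1Hyp ℓ ℓ₁ f₁) {c : ℝ} (hc1 : c ≤ 1) {s : ℝ} (hS : 0 ≤ s) :
    c ≤ gc f₁ c s := by
  apply le_csInf (gc_set_nonempty hf hc1 hS)
  rintro x ⟨γ, γ', hadm, hcs, rfl⟩
  refine hcs.trans (csSup_le ⟨γ 0, 0, left_mem_Icc.2 zero_le_one, rfl⟩ ?_)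
  rintro y ⟨t, ht, rfl⟩
  exact energy_ge_val hf hadm _ ht

lemma gc_le_crack (hf : F1Hyp ℓ ℓ₁ f₁) {c : ℝ} (hc1 : c ≤ 1) {δ S : ℝ}
    (hδ0 : 0 < δ) (hδ : δ < 1/2) (hS : 0 ≤ S) :
    gc f₁ c S ≤ 1 + 2 * δ * S * ℓ := by
  obtain ⟨γ, γ', hadm, hsup, hE⟩ := crack hf hδ0 hδ hS
  exact (gc_le_energy hadm (hc1.trans hsup) S).trans hE

lemma sqrt_q_mono {s' s a y : ℝ} (h0 : 0 ≤ s') (hss : s' ≤ s) :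
    Real.sqrt (s'^2 * a^2 + y) ≤ Real.sqrt (s^2 * a^2 + y) :=
  Real.sqrt_le_sqrt (by nlinarith [mul_le_mul_of_nonneg_right (pow_le_pow_left₀ h0 hss 2) (sq_nonneg a)])

lemma sqrt_q_shift {s σ a y ℓ : ℝ} (hs : 0 ≤ s) (hσ : 0 ≤ σ) (ha : 0 ≤ a) (hal : a ≤ ℓ)
    (hy : 0 ≤ y) :
    Real.sqrt ((s+σ)^2 * a^2 + y) ≤ Real.sqrt (s^2 * a^2 + y) + σ * ℓ := by
  have hnn : (0:ℝ) ≤ s^2 * a^2 + y := by positivity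
  have h1 : s * a ≤ Real.sqrt (s^2 * a^2 + y) := by
    have h2 := Real.sqrt_le_sqrt (show (s*a)^2 ≤ s^2*a^2 + y by nlinarith)
    rwa [Real.sqrt_sq (mul_nonneg hs ha)] at h2
  have hq := Real.sq_sqrt hnn
  have hsn := Real.sqrt_nonneg (s^2 * a^2 + y)
  have hB : 0 ≤ Real.sqrt (s^2 * a^2 + y) + σ * ℓ := by
    have : 0 ≤ σ * ℓ := mul_nonneg hσ (ha.trans hal)
    linarith
  have key : (s+σ)^2 * a^2 + y ≤ (Real.sqrt (s^2 * a^2 + y) + σ * ℓ)^2 := by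
    have hint1 : 2*σ*ℓ*(s*a) ≤ 2*σ*ℓ*Real.sqrt (s^2 * a^2 + y) :=
      mul_le_mul_of_nonneg_left h1
        (mul_nonneg (mul_nonneg (by norm_num : (0:ℝ) ≤ 2) hσ) (ha.trans hal))
    have hint2 : 2*σ*s*a*a ≤ 2*σ*s*a*ℓ :=
      mul_le_mul_of_nonneg_left hal
        (by have := mul_nonneg (mul_nonneg (mul_nonneg (by norm_num : (0:ℝ) ≤ 2) hσ) hs) ha
            linarith)
    have hint3 : σ^2*a^2 ≤ σ^2*ℓ^2 :=
      mul_le_mul_of_nonneg_left (by nlinarith) (sq_nonneg σ)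
    nlinarith [hint1, hint2, hint3]
  calc Real.sqrt ((s+σ)^2 * a^2 + y) ≤ Real.sqrt ((Real.sqrt (s^2 * a^2 + y) + σ * ℓ)^2) :=
        Real.sqrt_le_sqrt key
    _ = _ := Real.sqrt_sq hB

set_option maxHeartbeats 800000 in
/-- The key pointwise inequality quantifying the gain of lifting a profile by `h`. -/
lemma pointwise_saving {s ℓ δ' a b x : ℝ} (hs : 0 < s) (hl : 0 < ℓ) (ha0 : 0 ≤ a)
    (hal : a ≤ ℓ) (hb0 : 0 ≤ b) (hx : 0 ≤ x) (hδ : δ' ≤ a^2 - b^2) (hδ0 : 0 < δ') :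
    Real.sqrt (s^2 * b^2 + x^2) + (s^2*δ'/2) / (2*(s*ℓ)+1)
      + ((s*ℓ+1) - x) * ((s^2*δ'/2) / (2*(s*ℓ)+1)^2) ≤ Real.sqrt (s^2 * a^2 + x^2) := by
  set B := s^2*δ'/2 with hBdef
  have hB : 0 < B := by positivity
  set u := Real.sqrt (s^2 * a^2 + x^2) with hudef
  set v := Real.sqrt (s^2 * b^2 + x^2) with hvdef
  have hu2 : u^2 = s^2 * a^2 + x^2 := Real.sq_sqrt (by positivity)
  have hv2 : v^2 = s^2 * b^2 + x^2 := Real.sq_sqrt (by positivity)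
  have hun : 0 ≤ u := Real.sqrt_nonneg _
  have hvn : 0 ≤ v := Real.sqrt_nonneg _
  have hD : 0 < s*ℓ + x := by positivity
  have hD0 : 0 < 2*(s*ℓ)+1 := by positivity
  have hD0' : (2*(s*ℓ)+1) = s*ℓ + (s*ℓ+1) := by ring
  have ha2 : a^2 ≤ ℓ^2 := by nlinarith
  have hb2 : b^2 ≤ ℓ^2 := by nlinarith
  have hcross : 0 ≤ 2*(s*ℓ)*x := by positivity
  have hmulsa : s^2*a^2 ≤ s^2*ℓ^2 := mul_le_mul_of_nonneg_left ha2 (sq_nonneg s)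
  have hmulsb : s^2*b^2 ≤ s^2*ℓ^2 := mul_le_mul_of_nonneg_left hb2 (sq_nonneg s)
  have hu_le : u ≤ s*ℓ + x := by
    show Real.sqrt (s^2*a^2 + x^2) ≤ s*ℓ + x
    calc Real.sqrt (s^2*a^2 + x^2) ≤ Real.sqrt (s^2*ℓ^2 + 2*(s*ℓ)*x + x^2) :=
          Real.sqrt_le_sqrt (by linarith)
      _ = s*ℓ + x := by
          rw [show s^2*ℓ^2 + 2*(s*ℓ)*x + x^2 = (s*ℓ+x)^2 from by ring, Real.sqrt_sq hD.le]
  have hv_le : v ≤ s*ℓ + x := by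
    show Real.sqrt (s^2*b^2 + x^2) ≤ s*ℓ + x
    calc Real.sqrt (s^2*b^2 + x^2) ≤ Real.sqrt (s^2*ℓ^2 + 2*(s*ℓ)*x + x^2) :=
          Real.sqrt_le_sqrt (by linarith)
      _ = s*ℓ + x := by
          rw [show s^2*ℓ^2 + 2*(s*ℓ)*x + x^2 = (s*ℓ+x)^2 from by ring, Real.sqrt_sq hD.le]
  have huv : 0 ≤ u - v := by nlinarith
  have h1 : B / (s*ℓ + x) ≤ u - v := by
    rw [div_le_iff₀ hD]
    nlinarith [sq_nonneg s]
  have h2 : B/(2*(s*ℓ)+1) + ((s*ℓ+1) - x) * (B/(2*(s*ℓ)+1)^2) ≤ B / (s*ℓ + x) := by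
    have e : B/(2*(s*ℓ)+1) + ((s*ℓ+1) - x) * (B/(2*(s*ℓ)+1)^2)
        = B * ((2*(s*ℓ)+1) + (s*ℓ+1) - x) / (2*(s*ℓ)+1)^2 := by
      field_simp
      ring
    rw [e, div_le_div_iff₀ (by positivity) hD]
    nlinarith [mul_nonneg hB.le (sq_nonneg (x - (s*ℓ+1)))]
  linarith

/-- Uniform positive gap for `f₁(√·)²` under a shift by `h`. -/
lemma exists_delta' (hf : F1Hyp ℓ ℓ₁ f₁) {h : ℝ} (hh0 : 0 < h) (hh1 : h ≤ 1) :
    ∃ δ' > 0, ∀ x ∈ Icc (0:ℝ) (1-h),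
      δ' ≤ (f₁ (Real.sqrt x))^2 - (f₁ (Real.sqrt (x+h)))^2 := by
  have hsub : ∀ x ∈ Icc (0:ℝ) (1-h), x ∈ Icc (0:ℝ) 1 := fun x hx => ⟨hx.1, by
    have := hx.2; linarith⟩
  have hsub2 : ∀ x ∈ Icc (0:ℝ) (1-h), x + h ∈ Icc (0:ℝ) 1 := fun x hx => ⟨by
    have := hx.1; linarith, by have := hx.2; linarith⟩
  have hcont : ContinuousOn (fun x => (f₁ (Real.sqrt x))^2 - (f₁ (Real.sqrt (x+h)))^2)
      (Icc 0 (1-h)) := by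
    apply ContinuousOn.sub
    · apply ContinuousOn.pow
      apply hf.cont.comp (Real.continuous_sqrt.continuousOn)
      intro x hx
      exact sqrt_mem_Icc (hsub x hx)
    · apply ContinuousOn.pow
      apply ContinuousOn.comp (g := f₁) hf.cont
      · exact Real.continuous_sqrt.comp_continuousOn ((continuous_id.add continuous_const).continuousOn)
      · intro x hx
        exact sqrt_mem_Icc (hsub2 x hx)
  have hne : (0:ℝ) ∈ Icc (0:ℝ) (1-h) := ⟨le_rfl, by linarith⟩
  obtain ⟨x₀, hx₀, hmin⟩ := isCompact_Icc.exists_isMinOn ⟨0, hne⟩ hcont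
  refine ⟨_, ?_, fun x hx => hmin hx⟩
  have hlt : f₁ (Real.sqrt (x₀+h)) < f₁ (Real.sqrt x₀) := by
    apply hf.anti (sqrt_mem_Icc (hsub x₀ hx₀)) (sqrt_mem_Icc (hsub2 x₀ hx₀))
    exact Real.sqrt_lt_sqrt hx₀.1 (by linarith)
  have h0 := hf.nonneg _ (sqrt_mem_Icc (hsub2 x₀ hx₀))
  show (0:ℝ) < f₁ (Real.sqrt x₀)^2 - f₁ (Real.sqrt (x₀+h))^2
  nlinarith [mul_pos (sub_pos.2 hlt)
    (show (0:ℝ) < f₁ (Real.sqrt x₀) + f₁ (Real.sqrt (x₀+h)) by linarith)]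

lemma energy_mono (hf : F1Hyp ℓ ℓ₁ f₁) {γ γ' : ℝ → ℝ}
    (hc : ContinuousOn γ (Icc 0 1)) (hr : ∀ t ∈ Icc (0:ℝ) 1, γ t ∈ Icc (0:ℝ) 1)
    (hint : IntegrableOn γ' (Icc 0 1)) {s' s : ℝ} (h0 : 0 ≤ s') (hss : s' ≤ s) :
    energy f₁ s' γ γ' ≤ energy f₁ s γ γ' := by
  have h01 : (0:ℝ) ∈ Icc (0:ℝ) 1 := left_mem_Icc.2 zero_le_one
  have h11 : (1:ℝ) ∈ Icc (0:ℝ) 1 := right_mem_Icc.2 zero_le_one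
  rw [energy_eq, energy_eq]
  apply intervalIntegral.integral_mono_on zero_le_one
    (eI_intervalIntegrable hf hc hr hint s' h01 h11)
    (eI_intervalIntegrable hf hc hr hint s h01 h11)
  intro t _
  exact sqrt_q_mono h0 hss

lemma energy_shift (hf : F1Hyp ℓ ℓ₁ f₁) {γ γ' : ℝ → ℝ}
    (hc : ContinuousOn γ (Icc 0 1)) (hr : ∀ t ∈ Icc (0:ℝ) 1, γ t ∈ Icc (0:ℝ) 1)
    (hint : IntegrableOn γ' (Icc 0 1)) {s σ : ℝ} (hs : 0 ≤ s) (hσ : 0 ≤ σ) :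
    energy f₁ (s+σ) γ γ' ≤ energy f₁ s γ γ' + σ * ℓ := by
  have h01 : (0:ℝ) ∈ Icc (0:ℝ) 1 := left_mem_Icc.2 zero_le_one
  have h11 : (1:ℝ) ∈ Icc (0:ℝ) 1 := right_mem_Icc.2 zero_le_one
  have hstep : ∫ t in (0:ℝ)..1, eI f₁ (s+σ) γ γ' t
      ≤ ∫ t in (0:ℝ)..1, (eI f₁ s γ γ' t + σ * ℓ) := by
    apply intervalIntegral.integral_mono_on zero_le_one
      (eI_intervalIntegrable hf hc hr hint (s+σ) h01 h11)
      ((eI_intervalIntegrable hf hc hr hint s h01 h11).add intervalIntegrable_const)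
    intro t ht
    have h1 := hf.nonneg _ (sqrt_mem_Icc (hr t ht))
    have h2 := f1_le hf (sqrt_mem_Icc (hr t ht))
    exact sqrt_q_shift hs hσ h1 h2 (by positivity)
  rw [energy_eq, energy_eq]
  calc ∫ t in (0:ℝ)..1, eI f₁ (s+σ) γ γ' t
      ≤ ∫ t in (0:ℝ)..1, (eI f₁ s γ γ' t + σ * ℓ) := hstep
    _ = (∫ t in (0:ℝ)..1, eI f₁ s γ γ' t) + σ * ℓ := by
        rw [intervalIntegral.integral_add (eI_intervalIntegrable hf hc hr hint s h01 h11)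
          intervalIntegrable_const, intervalIntegral.integral_const]
        simp

lemma int_abs_le_two_energy (hf : F1Hyp ℓ ℓ₁ f₁) {γ γ' : ℝ → ℝ} (h : Admissible γ γ')
    (s : ℝ) : ∫ t in (0:ℝ)..1, |γ' t| ≤ 2 * energy f₁ s γ γ' := by
  have h01 : (0:ℝ) ∈ Icc (0:ℝ) 1 := left_mem_Icc.2 zero_le_one
  have h11 : (1:ℝ) ∈ Icc (0:ℝ) 1 := right_mem_Icc.2 zero_le_one
  rw [energy_eq, ← intervalIntegral.integral_const_mul]
  apply intervalIntegral.integral_mono_on zero_le_one ((adm_gamma'_II h h01 h11).abs)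
    ((adm_eI_integrable hf h s h01 h11).const_mul 2)
  intro t _
  linarith [abs_div_two_le_eI f₁ s γ γ' t]

/-- The lifted profile has strictly (quantitatively) smaller energy. -/
lemma energy_lift_le (hf : F1Hyp ℓ ℓ₁ f₁) {γa γa' : ℝ → ℝ} (ha : Admissible γa γa')
    {h : ℝ} (hh0 : 0 < h) (hh1 : h ≤ 1) (hhigh : ∀ t ∈ Icc (0:ℝ) 1, γa t ≤ 1 - h)
    {δ' : ℝ} (hδ0 : 0 < δ')
    (hδ : ∀ x ∈ Icc (0:ℝ) (1-h), δ' ≤ (f₁ (Real.sqrt x))^2 - (f₁ (Real.sqrt (x+h)))^2)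
    {s : ℝ} (hs : 0 < s) (hX : ∫ t in (0:ℝ)..1, |γa' t| ≤ 2*(s*ℓ+1)) :
    energy f₁ s (fun t => γa t + h) γa' + (s^2*δ'/2) / (2*(s*ℓ)+1) ≤ energy f₁ s γa γa' := by
  have h01 : (0:ℝ) ∈ Icc (0:ℝ) 1 := left_mem_Icc.2 zero_le_one
  have h11 : (1:ℝ) ∈ Icc (0:ℝ) 1 := right_mem_Icc.2 zero_le_one
  set B := s^2*δ'/2 with hBdef
  set lam := B / (2*(s*ℓ)+1)^2 with hlamdef
  have hlam : 0 < lam := by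
    rw [hlamdef, hBdef]
    have h1 : (0:ℝ) < 2*(s*ℓ) + 1 := by nlinarith [mul_pos hs hf.hl]
    positivity
  have hliftc : ContinuousOn (fun t => γa t + h) (Icc 0 1) :=
    (adm_cont ha).add continuousOn_const
  have hliftr : ∀ t ∈ Icc (0:ℝ) 1, γa t + h ∈ Icc (0:ℝ) 1 := by
    intro t ht
    constructor
    · have := (ha.2.2.1 t ht).1; linarith
    · have := hhigh t ht; linarith
  have hptwise : ∀ t ∈ Icc (0:ℝ) 1, eI f₁ s (fun u => γa u + h) γa' t
      ≤ eI f₁ s γa γa' t - B/(2*(s*ℓ)+1) - (s*ℓ+1) * lam + lam * (|γa' t| / 2) := by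
    intro t ht
    have hmem : γa t ∈ Icc (0:ℝ) (1-h) := ⟨(ha.2.2.1 t ht).1, hhigh t ht⟩
    have hmem1 : γa t ∈ Icc (0:ℝ) 1 := ⟨hmem.1, by linarith [hmem.2]⟩
    have hmem2 : γa t + h ∈ Icc (0:ℝ) 1 := hliftr t ht
    have ha0 := hf.nonneg _ (sqrt_mem_Icc hmem1)
    have hal := f1_le hf (sqrt_mem_Icc hmem1)
    have hb0 := hf.nonneg _ (sqrt_mem_Icc hmem2)
    have hgap := hδ _ hmem
    have hkey := pointwise_saving (a := f₁ (Real.sqrt (γa t)))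
      (b := f₁ (Real.sqrt (γa t + h))) (x := |γa' t| / 2) hs hf.hl ha0 hal hb0
      (by positivity) hgap hδ0
    have hx2 : (|γa' t| / 2)^2 = (γa' t)^2 / 4 := by
      rw [div_pow, sq_abs]; norm_num
    rw [hx2] at hkey
    unfold eI
    linarith [hkey]
  have hRHSint : IntervalIntegrable
      (fun t => eI f₁ s γa γa' t - B/(2*(s*ℓ)+1) - (s*ℓ+1) * lam + lam * (|γa' t| / 2))
      volume 0 1 := by
    apply IntervalIntegrable.add
    · exact ((adm_eI_integrable hf ha s h01 h11).sub intervalIntegrable_const).sub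
        intervalIntegrable_const
    · exact (((adm_gamma'_II ha h01 h11).abs).div_const 2).const_mul lam
  have hstep : energy f₁ s (fun t => γa t + h) γa'
      ≤ (energy f₁ s γa γa' - B/(2*(s*ℓ)+1) - (s*ℓ+1) * lam)
        + lam * ((∫ t in (0:ℝ)..1, |γa' t|) / 2) := by
    rw [energy_eq]
    calc ∫ t in (0:ℝ)..1, eI f₁ s (fun u => γa u + h) γa' t
        ≤ ∫ t in (0:ℝ)..1, (eI f₁ s γa γa' t - B/(2*(s*ℓ)+1) - (s*ℓ+1) * lam
            + lam * (|γa' t| / 2)) := by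
          apply intervalIntegral.integral_mono_on zero_le_one
            (eI_intervalIntegrable hf hliftc hliftr ha.1 s h01 h11) hRHSint hptwise
      _ = (energy f₁ s γa γa' - B/(2*(s*ℓ)+1) - (s*ℓ+1) * lam)
            + lam * ((∫ t in (0:ℝ)..1, |γa' t|) / 2) := by
          rw [intervalIntegral.integral_add (((adm_eI_integrable hf ha s h01 h11).sub
              intervalIntegrable_const).sub intervalIntegrable_const)
            ((((adm_gamma'_II ha h01 h11).abs).div_const 2).const_mul lam),
            intervalIntegral.integral_sub ((adm_eI_integrable hf ha s h01 h11).sub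
              intervalIntegrable_const) intervalIntegrable_const,
            intervalIntegral.integral_sub (adm_eI_integrable hf ha s h01 h11)
              intervalIntegrable_const,
            intervalIntegral.integral_const_mul, ← intervalIntegral.integral_div,
            intervalIntegral.integral_const, intervalIntegral.integral_const, energy_eq]
          simp
  have hfin : lam * ((∫ t in (0:ℝ)..1, |γa' t|) / 2) ≤ lam * (s*ℓ+1) := by
    apply mul_le_mul_of_nonneg_left _ hlam.le
    linarith
  have hD0 : (2*(s*ℓ)+1) = (s*ℓ) + (s*ℓ+1) := by ring
  have : (s*ℓ+1) * lam = lam * (s*ℓ+1) := by ring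
  linarith [hstep, hfin]

section Glue

variable {ℓ' : ℝ}

/-- scaling identity for the energy integrand. -/
lemma eI_scale {f₁ : ℝ → ℝ} {S p : ℝ} (hp : 0 < p) (γb γb' : ℝ → ℝ) (τ : ℝ) :
    Real.sqrt (S^2 * (f₁ (Real.sqrt (γb τ)))^2 + (γb' τ / p)^2/4)
      = (1/p) * eI f₁ (S*p) γb γb' τ := by
  unfold eI
  rw [show S^2 * (f₁ (Real.sqrt (γb τ)))^2 + (γb' τ / p)^2/4
      = (1/p)^2 * ((S*p)^2 * (f₁ (Real.sqrt (γb τ)))^2 + (γb' τ)^2/4) by field_simp]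
  rw [Real.sqrt_mul (sq_nonneg _), Real.sqrt_sq (by positivity : (0:ℝ) ≤ 1/p)]

/-- Gluing: insert a lifted excursion into a constrained profile at height `h`. -/
lemma glue (hf : F1Hyp ℓ ℓ₁ f₁) {γa γa' γb γb' : ℝ → ℝ} (ha : Admissible γa γa')
    (hb : Admissible γb γb') {h t₀ ρ : ℝ} (hh0 : 0 < h)
    (hhigh : ∀ t ∈ Icc (0:ℝ) 1, γa t ≤ 1 - h) (ht₀ : t₀ ∈ Ioo (0:ℝ) 1)
    (hbt₀ : γb t₀ = h) (hρ : ρ ∈ Ioo (0:ℝ) 1) {S : ℝ} (hS : 0 ≤ S) :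
    ∃ γ γ' : ℝ → ℝ, Admissible γ γ' ∧
      (∀ t ∈ Icc (0:ℝ) 1, ∃ u ∈ Icc (0:ℝ) 1, γ u = γb t) ∧
      energy f₁ S γ γ' = energy f₁ (S*(1-ρ)) γb γb'
        + energy f₁ (S*ρ) (fun τ => γa τ + h) γa' := by
  have h01 : (0:ℝ) ∈ Icc (0:ℝ) 1 := left_mem_Icc.2 zero_le_one
  have h11 : (1:ℝ) ∈ Icc (0:ℝ) 1 := right_mem_Icc.2 zero_le_one
  obtain ⟨hρ0, hρ1⟩ := hρ
  obtain ⟨ht₀0, ht₀1⟩ := ht₀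
  set p : ℝ := 1 - ρ with hpdef
  have hp0 : 0 < p := by rw [hpdef]; linarith
  have hp1 : p < 1 := by rw [hpdef]; linarith
  set u₀ : ℝ := p * t₀ with hu₀def
  set u₁ : ℝ := u₀ + ρ with hu₁def
  have hu₀0 : 0 < u₀ := mul_pos hp0 ht₀0
  have hu₀₁ : u₀ < u₁ := by rw [hu₁def]; linarith
  have hu₁1 : u₁ < 1 := by
    rw [hu₁def, hu₀def, hpdef]
    nlinarith
  have hu₀1 : u₀ < 1 := hu₀₁.trans hu₁1
  -- the glued profile and its derivative
  set Γ : ℝ → ℝ := fun t =>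
    if t ≤ u₀ then γb (t/p) else if t ≤ u₁ then γa ((t-u₀)/ρ) + h else γb ((t-ρ)/p)
    with hΓdef
  set Γ' : ℝ → ℝ := fun t =>
    if t ≤ u₀ then γb' (t/p)/p else if t ≤ u₁ then γa' ((t-u₀)/ρ)/ρ else γb' ((t-ρ)/p)/p
    with hΓ'def
  have hΓ1 : ∀ t, t ≤ u₀ → Γ t = γb (t/p) := fun t ht => if_pos ht
  have hΓ2 : ∀ t, u₀ < t → t ≤ u₁ → Γ t = γa ((t-u₀)/ρ) + h := fun t ht1 ht2 => by
    simp only [hΓdef]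
    rw [if_neg (not_le.2 ht1), if_pos ht2]
  have hΓ3 : ∀ t, u₁ < t → Γ t = γb ((t-ρ)/p) := fun t ht => by
    simp only [hΓdef]
    rw [if_neg (not_le.2 (hu₀₁.trans ht)), if_neg (not_le.2 ht)]
  have hΓ'1 : ∀ t, t ≤ u₀ → Γ' t = γb' (t/p)/p := fun t ht => if_pos ht
  have hΓ'2 : ∀ t, u₀ < t → t ≤ u₁ → Γ' t = γa' ((t-u₀)/ρ)/ρ := fun t ht1 ht2 => by
    simp only [hΓ'def]
    rw [if_neg (not_le.2 ht1), if_pos ht2]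
  have hΓ'3 : ∀ t, u₁ < t → Γ' t = γb' ((t-ρ)/p)/p := fun t ht => by
    simp only [hΓ'def]
    rw [if_neg (not_le.2 (hu₀₁.trans ht)), if_neg (not_le.2 ht)]
  -- membership arithmetic
  have hmem1 : ∀ t, 0 ≤ t → t ≤ u₀ → t/p ∈ Icc (0:ℝ) 1 ∧ t/p ≤ t₀ := by
    intro t h1 h2
    have ht₀le : t/p ≤ t₀ := by
      rw [div_le_iff₀ hp0]
      rw [hu₀def] at h2
      linarith [h2]
    exact ⟨⟨div_nonneg h1 hp0.le, ht₀le.trans ht₀1.le⟩, ht₀le⟩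
  have hmem2 : ∀ t, u₀ ≤ t → t ≤ u₁ → (t-u₀)/ρ ∈ Icc (0:ℝ) 1 := by
    intro t h1 h2
    constructor
    · exact div_nonneg (by linarith) hρ0.le
    · rw [div_le_one hρ0]
      rw [hu₁def] at h2
      linarith
  have hmem3 : ∀ t, u₁ ≤ t → t ≤ 1 → (t-ρ)/p ∈ Icc (0:ℝ) 1 ∧ t₀ ≤ (t-ρ)/p := by
    intro t h1 h2
    have e1 : t₀ ≤ (t-ρ)/p := by
      rw [le_div_iff₀ hp0]
      rw [hu₁def, hu₀def] at h1
      linarith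
    refine ⟨⟨(le_trans ht₀0.le e1), ?_⟩, e1⟩
    rw [div_le_one hp0, hpdef]
    linarith
  -- interval integrability of the pieces of Γ'
  have hbII : IntervalIntegrable γb' volume 0 1 := adm_gamma'_II hb h01 h11
  have haII : IntervalIntegrable γa' volume 0 1 := adm_gamma'_II ha h01 h11
  have hcomp1 : IntervalIntegrable (fun t => γb' (t/p)/p) volume 0 p := by
    apply IntervalIntegrable.div_const
    have h1 := hbII.comp_mul_right (c := p⁻¹)
    have h2 : (fun x => γb' (x * p⁻¹)) = (fun x => γb' (x/p)) := by
      funext x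
      rw [div_eq_mul_inv]
    rw [h2] at h1
    simpa [hp0.ne'] using h1
  have hcomp2 : IntervalIntegrable (fun t => γa' ((t-u₀)/ρ)/ρ) volume u₀ u₁ := by
    apply IntervalIntegrable.div_const
    have h1 := haII.comp_mul_right (c := ρ⁻¹)
    have h2 : (fun x => γa' (x * ρ⁻¹)) = (fun x => γa' (x/ρ)) := by
      funext x
      rw [div_eq_mul_inv]
    rw [h2] at h1
    have h3 : IntervalIntegrable (fun x => γa' (x/ρ)) volume 0 ρ := by
      simpa [hρ0.ne'] using h1
    have h4 := h3.comp_sub_right u₀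
    simpa [hu₁def, add_comm] using h4
  have hcomp3 : IntervalIntegrable (fun t => γb' ((t-ρ)/p)/p) volume u₁ 1 := by
    apply IntervalIntegrable.div_const
    have h1 := hbII.comp_mul_right (c := p⁻¹)
    have h2 : (fun x => γb' (x * p⁻¹)) = (fun x => γb' (x/p)) := by
      funext x
      rw [div_eq_mul_inv]
    rw [h2] at h1
    have h3 : IntervalIntegrable (fun x => γb' (x/p)) volume 0 p := by
      simpa [hp0.ne'] using h1
    have h4 : IntervalIntegrable (fun x => γb' ((x-ρ)/p)) volume (0+ρ) (p+ρ) :=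
      h3.comp_sub_right ρ
    apply h4.mono_set
    rw [uIcc_of_le (show u₁ ≤ (1:ℝ) by linarith), uIcc_of_le (show (0:ℝ)+ρ ≤ p+ρ by linarith)]
    apply Icc_subset_Icc
    · rw [hu₁def, hu₀def]; nlinarith
    · rw [hpdef]; linarith
  have hu₀p : u₀ ≤ p := by rw [hu₀def]; nlinarith
  have hu₀mem : u₀ ∈ Icc (0:ℝ) 1 := ⟨hu₀0.le, hu₀1.le⟩
  have hu₁mem : u₁ ∈ Icc (0:ℝ) 1 := ⟨by linarith, hu₁1.le⟩
  have ht₀mem : t₀ ∈ Icc (0:ℝ) 1 := ⟨ht₀0.le, ht₀1.le⟩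
  have hIcc1 : IntegrableOn Γ' (Icc 0 u₀) := by
    have hbase : IntegrableOn (fun t => γb' (t/p)/p) (Icc 0 u₀) := by
      apply (intervalIntegrable_iff_integrableOn_Icc_of_le hu₀0.le).1
      apply hcomp1.mono_set
      rw [uIcc_of_le hu₀0.le, uIcc_of_le hp0.le]
      exact Icc_subset_Icc_right hu₀p
    exact hbase.congr_fun (fun t ht => (hΓ'1 t ht.2).symm) measurableSet_Icc
  have hsing : ∀ z : ℝ, ∀ a b : ℝ, (volume.restrict (Icc a b)) {z} = 0 := by
    intro z a b
    rw [Measure.restrict_apply' measurableSet_Icc]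
    exact measure_mono_null inter_subset_left (measure_singleton z)
  have hIcc2 : IntegrableOn Γ' (Icc u₀ u₁) := by
    have hbase : IntegrableOn (fun t => γa' ((t-u₀)/ρ)/ρ) (Icc u₀ u₁) :=
      (intervalIntegrable_iff_integrableOn_Icc_of_le hu₀₁.le).1 hcomp2
    apply Integrable.congr hbase
    have hne : ∀ᵐ t ∂(volume.restrict (Icc u₀ u₁)), t ≠ u₀ := by
      rw [ae_iff]
      have he : {t : ℝ | ¬ t ≠ u₀} = {u₀} := by ext t; simp
      rw [he]
      exact hsing u₀ u₀ u₁
    filter_upwards [hne, ae_restrict_mem measurableSet_Icc] with t htne htmem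
    exact (hΓ'2 t (lt_of_le_of_ne htmem.1 (Ne.symm htne)) htmem.2).symm
  have hIcc3 : IntegrableOn Γ' (Icc u₁ 1) := by
    have hbase : IntegrableOn (fun t => γb' ((t-ρ)/p)/p) (Icc u₁ 1) :=
      (intervalIntegrable_iff_integrableOn_Icc_of_le hu₁1.le).1 hcomp3
    apply Integrable.congr hbase
    have hne : ∀ᵐ t ∂(volume.restrict (Icc u₁ 1)), t ≠ u₁ := by
      rw [ae_iff]
      have he : {t : ℝ | ¬ t ≠ u₁} = {u₁} := by ext t; simp
      rw [he]
      exact hsing u₁ u₁ 1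
    filter_upwards [hne, ae_restrict_mem measurableSet_Icc] with t htne htmem
    exact (hΓ'3 t (lt_of_le_of_ne htmem.1 (Ne.symm htne))).symm
  have hIntAll : IntegrableOn Γ' (Icc 0 1) := by
    apply ((hIcc1.union hIcc2).union hIcc3).mono_set
    intro x hx
    rcases le_total x u₀ with h' | h'
    · exact Or.inl (Or.inl ⟨hx.1, h'⟩)
    · rcases le_total x u₁ with h'' | h''
      · exact Or.inl (Or.inr ⟨h', h''⟩)
      · exact Or.inr ⟨h'', hx.2⟩
  have hΓ'II : ∀ a b : ℝ, a ∈ Icc (0:ℝ) 1 → b ∈ Icc (0:ℝ) 1 →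
      IntervalIntegrable Γ' volume a b :=
    fun a b ha' hb' => IntegrableOn.intervalIntegrable (hIntAll.mono_set (uIcc_subset_Icc ha' hb'))
  have hrepb := hb.2.1
  have hrepa := ha.2.1
  have hcalc1 : ∀ t, 0 ≤ t → t ≤ u₀ → ∫ u in (0:ℝ)..t, Γ' u = γb (t/p) := by
    intro t h1 h2
    have hEq : EqOn Γ' (fun u => γb' (u/p)/p) (uIcc 0 t) := by
      intro u hu
      rw [uIcc_of_le h1] at hu
      exact hΓ'1 u (hu.2.trans h2)
    rw [intervalIntegral.integral_congr hEq, intervalIntegral.integral_div]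
    rw [show (∫ u in (0:ℝ)..t, γb' (u/p)) = p • ∫ u in (0:ℝ)/p..t/p, γb' u from
      intervalIntegral.integral_comp_div _ hp0.ne']
    rw [zero_div, ← hrepb (t/p) (hmem1 t h1 h2).1, smul_eq_mul]
    field_simp
  have hA : ∫ u in (0:ℝ)..u₀, Γ' u = h := by
    rw [hcalc1 u₀ hu₀0.le le_rfl, show u₀/p = t₀ by rw [hu₀def]; field_simp, hbt₀]
  have hcalc2 : ∀ t, u₀ ≤ t → t ≤ u₁ → ∫ u in u₀..t, Γ' u = γa ((t-u₀)/ρ) := by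
    intro t h1 h2
    have hEq : ∀ᵐ u ∂volume, u ∈ Set.uIoc u₀ t → Γ' u = γa' ((u-u₀)/ρ)/ρ := by
      filter_upwards with u hu
      rw [uIoc_of_le h1] at hu
      exact hΓ'2 u hu.1 (hu.2.trans h2)
    rw [intervalIntegral.integral_congr_ae hEq, intervalIntegral.integral_div]
    rw [show (∫ u in u₀..t, γa' ((u-u₀)/ρ)) = ∫ u in u₀ - u₀..t - u₀, γa' (u/ρ) from
      intervalIntegral.integral_comp_sub_right (fun x => γa' (x/ρ)) u₀]
    rw [sub_self]
    rw [show (∫ u in (0:ℝ)..t-u₀, γa' (u/ρ)) = ρ • ∫ u in (0:ℝ)/ρ..(t-u₀)/ρ, γa' u from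
      intervalIntegral.integral_comp_div _ hρ0.ne']
    rw [zero_div, ← hrepa ((t-u₀)/ρ) (hmem2 t h1 h2), smul_eq_mul]
    field_simp
  have hB : ∫ u in (0:ℝ)..u₁, Γ' u = h := by
    rw [← intervalIntegral.integral_add_adjacent_intervals (hΓ'II 0 u₀ h01 hu₀mem)
      (hΓ'II u₀ u₁ hu₀mem hu₁mem), hA, hcalc2 u₁ hu₀₁.le le_rfl,
      show (u₁ - u₀)/ρ = 1 by rw [hu₁def]; field_simp; ring, ha.2.2.2.2]
    ring
  have hcalc3 : ∀ t, u₁ ≤ t → t ≤ 1 → ∫ u in u₁..t, Γ' u = γb ((t-ρ)/p) - h := by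
    intro t h1 h2
    have hEq : ∀ᵐ u ∂volume, u ∈ Set.uIoc u₁ t → Γ' u = γb' ((u-ρ)/p)/p := by
      filter_upwards with u hu
      rw [uIoc_of_le h1] at hu
      exact hΓ'3 u hu.1
    rw [intervalIntegral.integral_congr_ae hEq, intervalIntegral.integral_div]
    rw [show (∫ u in u₁..t, γb' ((u-ρ)/p)) = ∫ u in u₁ - ρ..t - ρ, γb' (u/p) from
      intervalIntegral.integral_comp_sub_right (fun x => γb' (x/p)) ρ]
    rw [show (∫ u in u₁ - ρ..t - ρ, γb' (u/p)) = p • ∫ u in (u₁-ρ)/p..(t-ρ)/p, γb' u from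
      intervalIntegral.integral_comp_div _ hp0.ne']
    rw [show (u₁ - ρ)/p = t₀ by rw [hu₁def, hu₀def]; field_simp; ring]
    rw [show (∫ u in t₀..(t-ρ)/p, γb' u)
        = (∫ u in (0:ℝ)..(t-ρ)/p, γb' u) - ∫ u in (0:ℝ)..t₀, γb' u from
      (intervalIntegral.integral_interval_sub_left
        (adm_gamma'_II hb h01 (hmem3 t h1 h2).1) (adm_gamma'_II hb h01 ht₀mem)).symm]
    rw [← hrepb ((t-ρ)/p) (hmem3 t h1 h2).1, ← hrepb t₀ ht₀mem, hbt₀, smul_eq_mul]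
    field_simp
  have hrep : ∀ t ∈ Icc (0:ℝ) 1, Γ t = ∫ u in (0:ℝ)..t, Γ' u := by
    intro t ht
    rcases le_or_gt t u₀ with h1 | h1
    · rw [hΓ1 t h1, hcalc1 t ht.1 h1]
    · rcases le_or_gt t u₁ with h2 | h2
      · rw [← intervalIntegral.integral_add_adjacent_intervals (hΓ'II 0 u₀ h01 hu₀mem)
          (hΓ'II u₀ t hu₀mem ht), hA, hcalc2 t h1.le h2, hΓ2 t h1 h2]
        ring
      · rw [← intervalIntegral.integral_add_adjacent_intervals (hΓ'II 0 u₁ h01 hu₁mem)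
          (hΓ'II u₁ t hu₁mem ht), hB, hcalc3 t h2.le ht.2, hΓ3 t h2]
        ring
  have hbounds : ∀ t ∈ Icc (0:ℝ) 1, 0 ≤ Γ t ∧ Γ t ≤ 1 := by
    intro t ht
    rcases le_or_gt t u₀ with h1 | h1
    · rw [hΓ1 t h1]
      exact hb.2.2.1 _ (hmem1 t ht.1 h1).1
    · rcases le_or_gt t u₁ with h2 | h2
      · rw [hΓ2 t h1 h2]
        have hmem := hmem2 t h1.le h2
        have hb1 := (ha.2.2.1 _ hmem).1
        have hb2 := hhigh _ hmem
        exact ⟨by linarith, by linarith⟩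
      · rw [hΓ3 t h2]
        exact hb.2.2.1 _ (hmem3 t h2.le ht.2).1
  have hΓzero : Γ 0 = 0 := by
    rw [hΓ1 0 hu₀0.le, zero_div]
    exact hb.2.2.2.1
  have hΓone : Γ 1 = 0 := by
    rw [hΓ3 1 hu₁1, show ((1:ℝ)-ρ)/p = 1 by rw [hpdef]; field_simp]
    exact hb.2.2.2.2
  have hadm : Admissible Γ Γ' := ⟨hIntAll, hrep, hbounds, hΓzero, hΓone⟩
  have hsurj : ∀ t ∈ Icc (0:ℝ) 1, ∃ u ∈ Icc (0:ℝ) 1, Γ u = γb t := by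
    intro t ht
    rcases le_or_gt t t₀ with h1 | h1
    · refine ⟨p*t, ⟨mul_nonneg hp0.le ht.1, by nlinarith [ht.2]⟩, ?_⟩
      rw [hΓ1 (p*t) (by rw [hu₀def]; nlinarith [h1, ht.1]), mul_div_cancel_left₀ _ hp0.ne']
    · refine ⟨ρ + p*t, ⟨by nlinarith [ht.1], by nlinarith [ht.2]⟩, ?_⟩
      rw [hΓ3 (ρ + p*t) (by rw [hu₁def, hu₀def]; nlinarith),
        show (ρ + p*t - ρ)/p = t by field_simp; ring]
  -- the energy identity
  have hE1 : ∫ t in (0:ℝ)..u₀, eI f₁ S Γ Γ' t = ∫ τ in (0:ℝ)..t₀, eI f₁ (S*p) γb γb' τ := by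
    have hEq : EqOn (eI f₁ S Γ Γ') (fun t => (1/p) * eI f₁ (S*p) γb γb' (t/p)) (uIcc 0 u₀) := by
      intro u hu
      rw [uIcc_of_le hu₀0.le] at hu
      unfold eI
      rw [hΓ1 u hu.2, hΓ'1 u hu.2]
      exact eI_scale hp0 γb γb' (u/p)
    rw [intervalIntegral.integral_congr hEq, intervalIntegral.integral_const_mul]
    rw [show (∫ t in (0:ℝ)..u₀, eI f₁ (S*p) γb γb' (t/p))
        = p • ∫ t in (0:ℝ)/p..u₀/p, eI f₁ (S*p) γb γb' t from
      intervalIntegral.integral_comp_div _ hp0.ne']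
    rw [zero_div, show u₀/p = t₀ by rw [hu₀def]; field_simp, smul_eq_mul]
    field_simp
  have hE2 : ∫ t in u₀..u₁, eI f₁ S Γ Γ' t
      = ∫ τ in (0:ℝ)..1, eI f₁ (S*ρ) (fun τ => γa τ + h) γa' τ := by
    have hEq : ∀ᵐ u ∂volume, u ∈ Set.uIoc u₀ u₁ → eI f₁ S Γ Γ' u
        = (1/ρ) * eI f₁ (S*ρ) (fun τ => γa τ + h) γa' ((u-u₀)/ρ) := by
      filter_upwards with u hu
      rw [uIoc_of_le hu₀₁.le] at hu
      unfold eI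
      rw [hΓ2 u hu.1 hu.2, hΓ'2 u hu.1 hu.2]
      exact eI_scale hρ0 (fun τ => γa τ + h) γa' ((u-u₀)/ρ)
    rw [intervalIntegral.integral_congr_ae hEq, intervalIntegral.integral_const_mul]
    rw [show (∫ t in u₀..u₁, eI f₁ (S*ρ) (fun τ => γa τ + h) γa' ((t-u₀)/ρ))
        = ∫ t in u₀ - u₀..u₁ - u₀, eI f₁ (S*ρ) (fun τ => γa τ + h) γa' (t/ρ) from
      intervalIntegral.integral_comp_sub_right
        (fun x => eI f₁ (S*ρ) (fun τ => γa τ + h) γa' (x/ρ)) u₀]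
    rw [sub_self, show u₁ - u₀ = ρ by rw [hu₁def]; ring]
    rw [show (∫ t in (0:ℝ)..ρ, eI f₁ (S*ρ) (fun τ => γa τ + h) γa' (t/ρ))
        = ρ • ∫ t in (0:ℝ)/ρ..ρ/ρ, eI f₁ (S*ρ) (fun τ => γa τ + h) γa' t from
      intervalIntegral.integral_comp_div _ hρ0.ne']
    rw [zero_div, div_self hρ0.ne', smul_eq_mul]
    field_simp
  have hE3 : ∫ t in u₁..1, eI f₁ S Γ Γ' t = ∫ τ in t₀..1, eI f₁ (S*p) γb γb' τ := by
    have hEq : ∀ᵐ u ∂volume, u ∈ Set.uIoc u₁ 1 → eI f₁ S Γ Γ' u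
        = (1/p) * eI f₁ (S*p) γb γb' ((u-ρ)/p) := by
      filter_upwards with u hu
      rw [uIoc_of_le hu₁1.le] at hu
      unfold eI
      rw [hΓ3 u hu.1, hΓ'3 u hu.1]
      exact eI_scale hp0 γb γb' ((u-ρ)/p)
    rw [intervalIntegral.integral_congr_ae hEq, intervalIntegral.integral_const_mul]
    rw [show (∫ t in u₁..(1:ℝ), eI f₁ (S*p) γb γb' ((t-ρ)/p))
        = ∫ t in u₁ - ρ..1 - ρ, eI f₁ (S*p) γb γb' (t/p) from
      intervalIntegral.integral_comp_sub_right (fun x => eI f₁ (S*p) γb γb' (x/p)) ρ]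
    rw [show (∫ t in u₁ - ρ..1 - ρ, eI f₁ (S*p) γb γb' (t/p))
        = p • ∫ t in (u₁-ρ)/p..(1-ρ)/p, eI f₁ (S*p) γb γb' t from
      intervalIntegral.integral_comp_div _ hp0.ne']
    rw [show (u₁ - ρ)/p = t₀ by rw [hu₁def, hu₀def]; field_simp; ring,
      show ((1:ℝ)-ρ)/p = 1 by rw [hpdef]; field_simp, smul_eq_mul]
    field_simp
  have hsplitΓ : energy f₁ S Γ Γ' = (∫ t in (0:ℝ)..u₀, eI f₁ S Γ Γ' t)
      + (∫ t in u₀..u₁, eI f₁ S Γ Γ' t) + ∫ t in u₁..1, eI f₁ S Γ Γ' t := by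
    rw [energy_eq,
      ← intervalIntegral.integral_add_adjacent_intervals
        (adm_eI_integrable hf hadm S h01 hu₁mem) (adm_eI_integrable hf hadm S hu₁mem h11),
      ← intervalIntegral.integral_add_adjacent_intervals
        (adm_eI_integrable hf hadm S h01 hu₀mem) (adm_eI_integrable hf hadm S hu₀mem hu₁mem)]
  have hsplitb : energy f₁ (S*p) γb γb' = (∫ τ in (0:ℝ)..t₀, eI f₁ (S*p) γb γb' τ)
      + ∫ τ in t₀..1, eI f₁ (S*p) γb γb' τ := by
    rw [energy_eq, ← intervalIntegral.integral_add_adjacent_intervals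
      (adm_eI_integrable hf hb (S*p) h01 ht₀mem) (adm_eI_integrable hf hb (S*p) ht₀mem h11)]
  refine ⟨Γ, Γ', hadm, hsurj, ?_⟩
  rw [hsplitΓ, hE1, hE2, hE3, hsplitb, energy_eq]
  ring

end Glue

end Stmt19

set_option maxHeartbeats 1000000 in
open Stmt19 in
/-- strict subadditivity of the constrained density against the pristine one:
for `c ∈ (0,1]`, `s₁ > 0`, `s₂ ≥ 0`, `g_c(s₁+s₂) < g₀(s₁) + g_c(s₂)`. -/
theorem stmt_19 (ℓ ℓ₁ : ℝ) (f₁ : ℝ → ℝ) (hf : F1Hyp ℓ ℓ₁ f₁)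
    (c : ℝ) (hc : c ∈ Ioc (0:ℝ) 1) (s₁ s₂ : ℝ) (h1 : 0 < s₁) (h2 : 0 ≤ s₂) :
    gc f₁ c (s₁ + s₂) < g0 f₁ s₁ + gc f₁ c s₂ := by
  obtain ⟨hc0, hc1⟩ := hc
  have h01 : (0:ℝ) ∈ Icc (0:ℝ) 1 := left_mem_Icc.2 zero_le_one
  have h11 : (1:ℝ) ∈ Icc (0:ℝ) 1 := right_mem_Icc.2 zero_le_one
  have hl := hf.hl
  set S := s₁ + s₂ with hSdef
  have hS0 : 0 < S := by rw [hSdef]; linarith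
  set h := c/2 with hhdef
  have hh0 : 0 < h := by rw [hhdef]; linarith
  have hh1 : h ≤ 1 := by rw [hhdef]; linarith
  obtain ⟨δ', hδ'0, hδ'⟩ := exists_delta' hf hh0 hh1
  set δA := (s₁^2*δ'/2) / (2*(s₁*ℓ)+1) with hδAdef
  have hden : (0:ℝ) < 2*(s₁*ℓ)+1 := by nlinarith [mul_pos h1 hl]
  have hδA0 : 0 < δA := by
    rw [hδAdef]
    apply div_pos (by positivity) hden
  set ε := min 1 (min (δA/8) (c/8)) with hεdef
  have hε0 : 0 < ε := by
    rw [hεdef]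
    apply lt_min one_pos (lt_min (by linarith) (by linarith))
  have hε1 : ε ≤ 1 := min_le_left _ _
  have hεδA : ε ≤ δA/8 := le_trans (min_le_right _ _) (min_le_left _ _)
  have hεc : ε ≤ c/8 := le_trans (min_le_right _ _) (min_le_right _ _)
  -- a near-optimal unconstrained profile for `s₁`
  have hg0lt : sInf {x | ∃ γ γ' : ℝ → ℝ, Admissible γ γ' ∧ x = energy f₁ s₁ γ γ'}
      < g0 f₁ s₁ + ε := by
    have : g0 f₁ s₁ = sInf {x | ∃ γ γ' : ℝ → ℝ, Admissible γ γ' ∧ x = energy f₁ s₁ γ γ'} := rfl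
    linarith [this ▸ (lt_add_of_pos_right (g0 f₁ s₁) hε0)]
  obtain ⟨x, hxmem, hxlt⟩ := (csInf_lt_iff (g0_set_bddBelow f₁ s₁)
    (g0_set_nonempty f₁ s₁)).1 hg0lt
  obtain ⟨γa, γa', hadma, rfl⟩ := hxmem
  -- a near-optimal constrained profile for `s₂`
  have hgclt : sInf {x | ∃ γ γ' : ℝ → ℝ, Admissible γ γ' ∧ c ≤ sSup (γ '' Icc (0:ℝ) 1) ∧
      x = energy f₁ s₂ γ γ'} < gc f₁ c s₂ + ε := by
    have : gc f₁ c s₂ = sInf {x | ∃ γ γ' : ℝ → ℝ, Admissible γ γ' ∧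
        c ≤ sSup (γ '' Icc (0:ℝ) 1) ∧ x = energy f₁ s₂ γ γ'} := rfl
    linarith [this ▸ (lt_add_of_pos_right (gc f₁ c s₂) hε0)]
  obtain ⟨y, hymem, hylt⟩ := (csInf_lt_iff (gc_set_bddBelow f₁ c s₂)
    (gc_set_nonempty hf hc1 h2)).1 hgclt
  obtain ⟨γb, γb', hadmb, hsupb, rfl⟩ := hymem
  have hEa : energy f₁ s₁ γa γa' < g0 f₁ s₁ + ε := hxlt
  have hEb : energy f₁ s₂ γb γb' < gc f₁ c s₂ + ε := hylt
  have hEb_ge : c ≤ energy f₁ s₂ γb γb' := by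
    refine hsupb.trans (csSup_le ⟨γb 0, 0, h01, rfl⟩ ?_)
    rintro z ⟨t, ht, rfl⟩
    exact energy_ge_val hf hadmb _ ht
  by_cases hcase : ∀ t ∈ Icc (0:ℝ) 1, γa t ≤ 1 - h
  · -- Case A: the unconstrained profile stays below `1 - h`; glue a lifted copy in.
    have hcontb := adm_cont hadmb
    have himg : IsCompact (γb '' Icc 0 1) := isCompact_Icc.image_of_continuousOn hcontb
    have hne : (γb '' Icc 0 1).Nonempty := ⟨γb 0, 0, h01, rfl⟩
    obtain ⟨tm, htm, htmeq⟩ := himg.sSup_mem hne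
    have htmval : c ≤ γb tm := by rw [htmeq]; exact hsupb
    have hivt : h ∈ γb '' Icc 0 tm := by
      apply intermediate_value_Icc htm.1 (hcontb.mono (Icc_subset_Icc le_rfl htm.2))
      rw [hadmb.2.2.2.1]
      exact ⟨hh0.le, by rw [hhdef]; linarith⟩
    obtain ⟨t₀, ht₀mem, ht₀eq⟩ := hivt
    have ht₀0 : 0 < t₀ := by
      rcases eq_or_lt_of_le ht₀mem.1 with e | e
      · exfalso
        rw [← e, hadmb.2.2.2.1] at ht₀eq
        linarith
      · exact e
    have ht₀1 : t₀ < 1 := by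
      rcases eq_or_lt_of_le (ht₀mem.2.trans htm.2) with e | e
      · exfalso
        rw [e, hadmb.2.2.2.2] at ht₀eq
        linarith
      · exact e
    set σ := min (s₁/2) (δA/(8*(ℓ+1))) with hσdef
    have hσ0 : 0 < σ := lt_min (by linarith) (by positivity)
    have hσs₁ : σ < s₁ := lt_of_le_of_lt (min_le_left _ _) (by linarith)
    have hσδA : σ * ℓ ≤ δA/8 := by
      have h1' : σ ≤ δA/(8*(ℓ+1)) := min_le_right _ _
      have h2' : σ * ℓ ≤ (δA/(8*(ℓ+1))) * ℓ := mul_le_mul_of_nonneg_right h1' hl.le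
      have h3' : (δA/(8*(ℓ+1))) * ℓ ≤ δA/8 := by
        rw [div_mul_eq_mul_div, div_le_div_iff₀ (by positivity) (by norm_num)]
        nlinarith
      linarith
    set ρ := (s₁ - σ)/S with hρdef
    have hρ0 : 0 < ρ := div_pos (by linarith) hS0
    have hρ1 : ρ < 1 := by
      rw [hρdef, div_lt_one hS0, hSdef]
      linarith
    obtain ⟨Γ, Γ', hadmΓ, hsurjΓ, hEΓ⟩ := glue hf hadma hadmb hh0 hcase ⟨ht₀0, ht₀1⟩
      ht₀eq ⟨hρ0, hρ1⟩ hS0.le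
    have hSp : S * (1 - ρ) = s₂ + σ := by
      rw [hρdef]
      field_simp
      rw [hSdef]
      ring
    have hSρ : S * ρ = s₁ - σ := by
      rw [hρdef]
      field_simp
    have hconstr : c ≤ sSup (Γ '' Icc (0:ℝ) 1) := by
      obtain ⟨u, humem, hueq⟩ := hsurjΓ tm htm
      have : c ≤ Γ u := by rw [hueq]; exact htmval
      refine this.trans (le_csSup ⟨1, ?_⟩ ⟨u, humem, rfl⟩)
      rintro z ⟨t, ht, rfl⟩
      exact (hadmΓ.2.2.1 t ht).2
    have hgcS : gc f₁ c S ≤ energy f₁ S Γ Γ' := gc_le_energy hadmΓ hconstr S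
    -- bound on the compressed `γb`-part
    have hpartb : energy f₁ (S * (1 - ρ)) γb γb' ≤ energy f₁ s₂ γb γb' + σ * ℓ := by
      rw [hSp]
      exact energy_shift hf hcontb (fun t ht => ⟨(hadmb.2.2.1 t ht).1, (hadmb.2.2.1 t ht).2⟩)
        hadmb.1 h2 hσ0.le
    -- bound on the lifted excursion part
    have hliftc : ContinuousOn (fun t => γa t + h) (Icc 0 1) :=
      (adm_cont hadma).add continuousOn_const
    have hliftr : ∀ t ∈ Icc (0:ℝ) 1, γa t + h ∈ Icc (0:ℝ) 1 := by
      intro t ht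
      have := (hadma.2.2.1 t ht).1
      have := hcase t ht
      constructor <;> linarith
    have hX : ∫ t in (0:ℝ)..1, |γa' t| ≤ 2*(s₁*ℓ+1) := by
      have hb1 := int_abs_le_two_energy hf hadma s₁
      have hb2 := g0_le_lin hf h1.le
      linarith
    have hlift := energy_lift_le hf hadma hh0 hh1 hcase hδ'0 hδ' h1 hX
    have hparta : energy f₁ (S * ρ) (fun τ => γa τ + h) γa' ≤ energy f₁ s₁ γa γa' - δA := by
      have hmono : energy f₁ (S * ρ) (fun τ => γa τ + h) γa'
          ≤ energy f₁ s₁ (fun τ => γa τ + h) γa' := by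
        apply energy_mono hf hliftc hliftr hadma.1 (by rw [hSρ]; linarith) (by rw [hSρ]; linarith)
      rw [hδAdef]
      linarith
    calc gc f₁ c S ≤ energy f₁ S Γ Γ' := hgcS
      _ = energy f₁ (S * (1 - ρ)) γb γb' + energy f₁ (S * ρ) (fun τ => γa τ + h) γa' := hEΓ
      _ ≤ (energy f₁ s₂ γb γb' + σ * ℓ) + (energy f₁ s₁ γa γa' - δA) := by
          linarith
      _ < g0 f₁ s₁ + gc f₁ c s₂ := by linarith
  · -- Case B: the unconstrained profile climbs above `1 - h`; use the full crack.
    push_neg at hcase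
    obtain ⟨ta, hta, htaval⟩ := hcase
    have hEa_ge : 1 - h < energy f₁ s₁ γa γa' :=
      lt_of_lt_of_le htaval (energy_ge_val hf hadma s₁ hta)
    set δcr := min (1/4) (c/(16*(S*ℓ+1))) with hδcrdef
    have hSl : 0 < S*ℓ+1 := by nlinarith [mul_pos hS0 hl]
    have hδcr0 : 0 < δcr := lt_min (by norm_num) (div_pos hc0 (by linarith))
    have hδcr12 : δcr < 1/2 := lt_of_le_of_lt (min_le_left _ _) (by norm_num)
    have hcrack := gc_le_crack hf hc1 hδcr0 hδcr12 hS0.le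
    have hδcrb : 2 * δcr * S * ℓ ≤ c/8 := by
      have h1' : δcr ≤ c/(16*(S*ℓ+1)) := min_le_right _ _
      have h2' : (0:ℝ) ≤ 2*(S*ℓ) := by nlinarith [mul_pos hS0 hl]
      have hm := mul_le_mul_of_nonneg_right h1' h2'
      have h3' : 2 * δcr * S * ℓ ≤ 2 * (c/(16*(S*ℓ+1))) * (S*ℓ) := by
        calc 2 * δcr * S * ℓ = δcr * (2*(S*ℓ)) := by ring
          _ ≤ (c/(16*(S*ℓ+1))) * (2*(S*ℓ)) := hm
          _ = 2 * (c/(16*(S*ℓ+1))) * (S*ℓ) := by ring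
      have h4' : 2 * (c/(16*(S*ℓ+1))) * (S*ℓ) ≤ c/8 := by
        rw [show 2 * (c/(16*(S*ℓ+1))) * (S*ℓ) = c * (2*(S*ℓ))/(16*(S*ℓ+1)) by ring]
        rw [div_le_div_iff₀ (by linarith) (by norm_num : (0:ℝ) < 8)]
        nlinarith [hc0.le, mul_pos hS0 hl]
      linarith
    have : gc f₁ c S ≤ 1 + c/8 := hcrack.trans (by linarith)
    have hrhs : 1 + c/8 < g0 f₁ s₁ + gc f₁ c s₂ := by
      have e1 : 1 - h - ε < g0 f₁ s₁ := by linarith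
      have e2 : c - ε < gc f₁ c s₂ := by linarith
      rw [hhdef] at e1
      linarith
    linarith
end
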